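/- arXiv:2008.10315 — 3 statements merged into one kernel-verified Lean document; each statement's English description precedes it below -/
import Mathlib

section
/- Let U ⊆ A_d be a linear subspace of codimension k with k ≤ d. Then for a generic linear form l ∈ A₁ one has U + l·A_{d−1} = A_d, and consequently the subspace (U:l) = {q ∈ A_{d−1} : l·q ∈ U} has codimension k in A_{d−1}. -/
open MvPolynomial Module

noncomputable section

abbrev PolyR (n : ℕ) := MvPolynomial (Fin n) ℂ

def formSpace (n d : ℕ) : Submodule ℂ (PolyR n) :=
  homogeneousSubmodule (Fin n) ℂ d

/-- Codimension of a subspace `U` inside the space of degree-`d` forms. -/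
def vcodim (n d : ℕ) (U : Submodule ℂ (PolyR n)) : ℕ :=
  finrank ℂ (formSpace n d) - finrank ℂ U

/-- `U` is base-point-free: the only common zero of its members in `ℂⁿ` is `0`. -/
def IsBPF (n : ℕ) (U : Submodule ℂ (PolyR n)) : Prop :=
  ∀ x : Fin n → ℂ, (∀ p ∈ U, eval x p = 0) → x = 0

/-- `m(n,d,k)`: maximum of `codim U²` over codimension-`k` subspaces `U ⊆ A(n)_d`. -/
def mMax (n d k : ℕ) : ℕ :=
  sSup { s | ∃ U : Submodule ℂ (PolyR n),
    U ≤ formSpace n d ∧ vcodim n d U = k ∧ vcodim n (2 * d) (U * U) = s }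

def linForm (n : ℕ) (c : Fin n → ℂ) : PolyR n := ∑ i, c i • X i

def colon (n d : ℕ) (U : Submodule ℂ (PolyR n)) (l : PolyR n) : Submodule ℂ (PolyR n) :=
  Submodule.comap (LinearMap.mulLeft ℂ l) U ⊓ formSpace n (d - 1)

end

set_option maxHeartbeats 4000000
set_option synthInstance.maxHeartbeats 1000000

/-! ### Auxiliary material -/

noncomputable section AuxAll

open Finset

variable {n d : ℕ}

def msupp (n d : ℕ) : Finset (Fin n →₀ ℕ) := Finset.finsuppAntidiag Finset.univ d

lemma mem_msupp {α : Fin n →₀ ℕ} : α ∈ msupp n d ↔ Finset.univ.sum ⇑α = d := by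
  simp [msupp, Finset.mem_finsuppAntidiag]

lemma degree_eq_univ_sum (α : Fin n →₀ ℕ) : α.degree = Finset.univ.sum ⇑α :=
  Finset.sum_subset (Finset.subset_univ _) (fun x _ hx => Finsupp.notMem_support_iff.mp hx)

lemma monomial_mem_fs {α : Fin n →₀ ℕ} (h : α ∈ msupp n d) :
    (monomial α (1:ℂ)) ∈ formSpace n d :=
  isHomogeneous_monomial _ (by rw [degree_eq_univ_sum]; exact mem_msupp.mp h)

lemma fs_span : formSpace n d
    = Submodule.span ℂ ((fun α => (monomial α (1:ℂ))) '' (msupp n d)) := by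
  apply le_antisymm
  · intro p hp
    have hh : p.IsHomogeneous d := hp
    rw [← p.support_sum_monomial_coeff]
    apply Submodule.sum_mem
    intro α hα
    have h1 : monomial α (coeff α p) = (coeff α p) • monomial α (1:ℂ) := by
      rw [smul_monomial, smul_eq_mul, mul_one]
    rw [h1]
    apply Submodule.smul_mem
    apply Submodule.subset_span
    refine ⟨α, ?_, rfl⟩
    simp only [Finset.mem_coe, mem_msupp]
    by_contra hne
    exact (MvPolynomial.mem_support_iff.mp hα)
      (hh.coeff_eq_zero (by rwa [degree_eq_univ_sum]))
  · rw [Submodule.span_le]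
    rintro x ⟨α, hα, rfl⟩
    exact monomial_mem_fs (Finset.mem_coe.mp hα)

instance fs_fd : FiniteDimensional ℂ (formSpace n d) := by
  rw [fs_span]
  exact FiniteDimensional.span_of_finite ℂ ((msupp n d).finite_toSet.image _)

lemma mem_fs_mul {a b : ℕ} {p q : PolyR n} (hp : p ∈ formSpace n a) (hq : q ∈ formSpace n b) :
    p * q ∈ formSpace n (a + b) := IsHomogeneous.mul hp hq

lemma mul_lin_mem {e : ℕ} {l q : PolyR n} (hl : l ∈ formSpace n 1) (hq : q ∈ formSpace n e) :
    l * q ∈ formSpace n (e + 1) := by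
  have := mem_fs_mul hl hq
  rwa [Nat.add_comm] at this

lemma linForm_mem (c : Fin n → ℂ) : linForm n c ∈ formSpace n 1 := by
  apply Submodule.sum_mem
  intro i _
  exact Submodule.smul_mem _ _ (isHomogeneous_X ℂ i)

lemma pow_mem_fs {m : ℕ} {p : PolyR n} (hp : p ∈ formSpace n 1) :
    p ^ m ∈ formSpace n m := by
  have : (p ^ m).IsHomogeneous (1 * m) := IsHomogeneous.pow hp m
  rwa [one_mul] at this

lemma linForm_mul (c : Fin n → ℂ) (q : PolyR n) :
    linForm n c * q = ∑ i, c i • (X i * q) := by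
  rw [linForm, Finset.sum_mul]
  exact Finset.sum_congr rfl fun i _ => smul_mul_assoc _ _ _

lemma exists_eval_ne_zero {σ : Type*} {p : MvPolynomial σ ℂ} (hp : p ≠ 0) :
    ∃ x : σ → ℂ, eval x p ≠ 0 := by
  by_contra h
  push_neg at h
  exact hp (MvPolynomial.funext fun x => by rw [h x, map_zero])

lemma eval_bind {σ τ : Type*} (pt : τ → ℂ) (g : σ → MvPolynomial τ ℂ) (p : MvPolynomial σ ℂ) :
    eval pt (bind₁ g p) = eval (fun i => eval pt (g i)) p :=
  eval₂Hom_bind₁ _ _ _ _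

/-! #### linear algebra over a field -/
section MatrixAux
open Matrix

lemma rows_indep_rightInv {F : Type*} [Field F] {k : ℕ} {J : Type*} [Fintype J] [DecidableEq J]
    (M : Matrix (Fin k) J F)
    (h : ∀ a : Fin k → F, (∀ j, ∑ i, a i * M i j = 0) → a = 0) :
    ∃ Cm : Matrix J (Fin k) F, M * Cm = 1 := by
  have hinj : Function.Injective M.vecMulLinear := by
    rw [← LinearMap.ker_eq_bot, LinearMap.ker_eq_bot']
    intro a ha
    apply h
    intro j
    have := congrFun (congrArg (fun (f : J → F) => f) ha) j
    simpa [Matrix.vecMulLinear_apply, Matrix.vecMul, dotProduct] using this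
  have hT : (Mᵀ).mulVecLin = M.vecMulLinear := by
    apply LinearMap.ext
    intro v
    rw [Matrix.mulVecLin_apply, Matrix.vecMulLinear_apply, Matrix.mulVec_transpose]
  have hrankT : (Mᵀ).rank = k := by
    rw [Matrix.rank, hT, LinearMap.finrank_range_of_inj hinj]
    simp [Module.finrank_pi]
  have hrank : M.rank = k := by rw [← Matrix.rank_transpose, hrankT]
  have hrange : LinearMap.range M.mulVecLin = ⊤ := by
    apply Submodule.eq_top_of_finrank_eq
    rw [← Matrix.rank, hrank]
    simp [Module.finrank_pi]
  have hsurj : ∀ i : Fin k, ∃ x : J → F, M.mulVec x = Pi.single i 1 := by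
    intro i
    have : (Pi.single i 1 : Fin k → F) ∈ LinearMap.range M.mulVecLin := by
      rw [hrange]; trivial
    obtain ⟨x, hx⟩ := this
    exact ⟨x, hx⟩
  choose xs hxs using hsurj
  refine ⟨fun j i => xs i j, ?_⟩
  ext i' i
  have := congrFun (hxs i) i'
  simp only [Matrix.mulVec, dotProduct] at this
  show ∑ j, M i' j * xs i j = _
  simp only [this]
  rw [Matrix.one_apply, Pi.single_apply]

lemma det_rightInv_rows_indep {F : Type*} [Field F] {k : ℕ} {J : Type*} [Fintype J]
    [DecidableEq J] (M : Matrix (Fin k) J F) (Cm : Matrix J (Fin k) F)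
    (h : (M * Cm).det ≠ 0) :
    ∀ a : Fin k → F, (∀ j, ∑ i, a i * M i j = 0) → a = 0 := by
  intro a ha
  have hu : IsUnit (M * Cm).det := isUnit_iff_ne_zero.mpr h
  have h0 : a ᵥ* M = 0 := funext fun j => by
    simpa [Matrix.vecMul, dotProduct] using ha j
  have h1 : a ᵥ* (M * Cm) = 0 := by
    rw [← Matrix.vecMul_vecMul, h0, Matrix.zero_vecMul]
  have h2 := congrArg (fun v => v ᵥ* (M * Cm)⁻¹) h1
  simp only [Matrix.vecMul_vecMul, Matrix.zero_vecMul] at h2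
  rwa [Matrix.mul_nonsing_inv _ hu, Matrix.vecMul_one] at h2

lemma inner_dim_le {F : Type*} [Field F] {p q : ℕ}
    (A : Matrix (Fin p) (Fin q) F) (B : Matrix (Fin q) (Fin p) F)
    (h : (A * B).det ≠ 0) : p ≤ q := by
  have hu : IsUnit (A * B).det := isUnit_iff_ne_zero.mpr h
  have hsurj : Function.Surjective (A * B).mulVecLin := by
    intro v
    refine ⟨(A * B)⁻¹ *ᵥ v, ?_⟩
    rw [Matrix.mulVecLin_apply, Matrix.mulVec_mulVec, Matrix.mul_nonsing_inv _ hu,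
      Matrix.one_mulVec]
  rw [Matrix.mulVecLin_mul, LinearMap.coe_comp] at hsurj
  have hA : Function.Surjective A.mulVecLin := hsurj.of_comp
  have h1 := LinearMap.finrank_range_add_finrank_ker A.mulVecLin
  rw [LinearMap.range_eq_top.mpr hA] at h1
  simp only [finrank_top, Module.finrank_pi, Fintype.card_fin] at h1
  omega

end MatrixAux

/-! #### powers of linear forms -/

def pMon (n : ℕ) (m : Fin n → ℕ) : PolyR n := ∏ t, X t ^ m t

lemma pMon_mem {m : Fin n → ℕ} (hm : m ∈ Finset.piAntidiag Finset.univ d) :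
    pMon n m ∈ formSpace n d := by
  have h : (∑ t, m t) = d := (Finset.mem_piAntidiag.mp hm).1
  have := MvPolynomial.IsHomogeneous.prod Finset.univ (fun t => (X t : PolyR n) ^ m t) m
    (fun t _ => isHomogeneous_X_pow t (m t))
  rw [h] at this
  exact this

lemma pMon_eq_monomial (m : Fin n → ℕ) :
    pMon n m = monomial (Finsupp.equivFunOnFinite.symm m) (1 : ℂ) := by
  rw [← prod_X_pow_eq_monomial, pMon]
  rw [← Finset.prod_subset (Finset.subset_univ ((Finsupp.equivFunOnFinite.symm m).support))
    (fun x _ hx => by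
      have h0 : m x = 0 := Finsupp.notMem_support_iff.mp hx
      rw [h0, pow_zero])]
  exact Finset.prod_congr rfl fun x _ => rfl

lemma linForm_pow_expand (y : Fin n → ℂ) :
    linForm n y ^ d = ∑ m ∈ Finset.piAntidiag Finset.univ d,
      C ((Nat.multinomial Finset.univ m : ℂ) * ∏ t, y t ^ m t) * pMon n m := by
  rw [linForm, Finset.sum_pow_eq_sum_piAntidiag]
  refine Finset.sum_congr rfl fun m hm => ?_
  rw [map_mul]
  have h1 : ∏ t, (y t • (X t : PolyR n)) ^ m t
      = C (∏ t, y t ^ m t) * pMon n m := by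
    rw [pMon, map_prod, ← Finset.prod_mul_distrib]
    refine Finset.prod_congr rfl fun t _ => ?_
    rw [smul_pow, smul_eq_C_mul, map_pow]
  rw [h1, ← mul_assoc]
  congr 1

def pw (n d : ℕ) (y : Fin n → ℂ) : formSpace n d :=
  ⟨linForm n y ^ d, pow_mem_fs (linForm_mem y)⟩

def pMonEl (n d : ℕ) (m : (Finset.piAntidiag (Finset.univ : Finset (Fin n)) d)) :
    formSpace n d := ⟨pMon n m.1, pMon_mem m.2⟩

lemma psi_pow (ψ : Dual ℂ (formSpace n d)) (y : Fin n → ℂ) :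
    ψ (pw n d y) = ∑ m ∈ (Finset.piAntidiag (Finset.univ : Finset (Fin n)) d).attach,
      ((Nat.multinomial Finset.univ m.1 : ℂ) * ∏ t, y t ^ m.1 t) * ψ (pMonEl n d m) := by
  have hv : pw n d y = ∑ m ∈ (Finset.piAntidiag (Finset.univ : Finset (Fin n)) d).attach,
      ((Nat.multinomial Finset.univ m.1 : ℂ) * ∏ t, y t ^ m.1 t) • pMonEl n d m := by
    apply Subtype.ext
    push_cast [pw, pMonEl]
    rw [linForm_pow_expand, ← Finset.sum_attach (Finset.piAntidiag Finset.univ d)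
      (fun m => C ((Nat.multinomial Finset.univ m : ℂ) * ∏ t, y t ^ m t) * pMon n m)]
    refine Finset.sum_congr rfl fun m _ => ?_
    rw [smul_eq_C_mul]
  rw [hv, map_sum]
  refine Finset.sum_congr rfl fun m _ => ?_
  rw [map_smul, smul_eq_mul]

def Qpol (n d : ℕ) (ψ : Dual ℂ (formSpace n d)) : PolyR n :=
  ∑ m ∈ (Finset.piAntidiag (Finset.univ : Finset (Fin n)) d).attach,
    C ((Nat.multinomial Finset.univ m.1 : ℂ) * ψ (pMonEl n d m)) * pMon n m.1

lemma eval_Qpol (ψ : Dual ℂ (formSpace n d)) (y : Fin n → ℂ) :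
    eval y (Qpol n d ψ) = ψ (pw n d y) := by
  rw [Qpol, map_sum, psi_pow]
  refine Finset.sum_congr rfl fun m _ => ?_
  rw [map_mul, eval_C, pMon, map_prod]
  simp only [map_pow, eval_X]
  ring

lemma dual_zero_of_kill_monomials (ψ : Dual ℂ (formSpace n d))
    (h : ∀ α (hα : α ∈ msupp n d), ψ ⟨monomial α 1, monomial_mem_fs hα⟩ = 0) : ψ = 0 := by
  apply LinearMap.ext
  rintro ⟨p, hp⟩
  have hp' : p ∈ Submodule.span ℂ ((fun α => (monomial α (1:ℂ))) '' (msupp n d)) := by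
    rw [← fs_span]; exact hp
  refine Submodule.span_induction (p := fun x hx =>
      ψ ⟨x, by rw [fs_span]; exact hx⟩ = 0) ?_ ?_ ?_ ?_ hp'
  · rintro x ⟨α, hα, rfl⟩
    exact h α hα
  · exact map_zero ψ
  · intro x y hx hy hpx hpy
    have : (⟨x + y, by rw [fs_span]; exact Submodule.add_mem _ hx hy⟩ : formSpace n d)
        = ⟨x, by rw [fs_span]; exact hx⟩ + ⟨y, by rw [fs_span]; exact hy⟩ := rfl
    rw [this, map_add, hpx, hpy, add_zero]
  · intro a x hx hpx
    have : (⟨a • x, by rw [fs_span]; exact Submodule.smul_mem _ a hx⟩ : formSpace n d)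
        = a • ⟨x, by rw [fs_span]; exact hx⟩ := rfl
    rw [this, map_smul, hpx, smul_zero]

lemma dual_zero_of_kill_powers (ψ : Dual ℂ (formSpace n d))
    (h : ∀ y : Fin n → ℂ, ψ (pw n d y) = 0) : ψ = 0 := by
  have hQ : Qpol n d ψ = 0 := by
    apply MvPolynomial.funext
    intro y
    rw [eval_Qpol, h, map_zero]
  have hcoeff : ∀ m : (Finset.piAntidiag (Finset.univ : Finset (Fin n)) d),
      ψ (pMonEl n d m) = 0 := by
    intro m
    have h1 : coeff (Finsupp.equivFunOnFinite.symm m.1) (Qpol n d ψ)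
        = (Nat.multinomial Finset.univ m.1 : ℂ) * ψ (pMonEl n d m) := by
      rw [Qpol]
      rw [MvPolynomial.coeff_sum]
      rw [Finset.sum_eq_single m]
      · rw [pMon_eq_monomial, C_mul_monomial, mul_one, coeff_monomial, if_pos rfl]
      · intro b _ hbm
        rw [pMon_eq_monomial, C_mul_monomial, mul_one, coeff_monomial, if_neg]
        intro hbeq
        exact hbm (Subtype.ext (Finsupp.equivFunOnFinite.symm.injective hbeq))
      · intro hm; exact absurd (Finset.mem_attach _ m) hm
    rw [hQ] at h1
    simp only [coeff_zero] at h1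
    have hmul : (Nat.multinomial Finset.univ m.1 : ℂ) ≠ 0 := by
      exact_mod_cast (Nat.multinomial_pos _ _).ne'
    exact by
      rcases mul_eq_zero.mp h1.symm with h' | h'
      · exact absurd h' hmul
      · exact h'
  apply dual_zero_of_kill_monomials
  intro α hα
  have hmem : (⇑α : Fin n → ℕ) ∈ Finset.piAntidiag (Finset.univ : Finset (Fin n)) d := by
    rw [Finset.mem_piAntidiag]
    exact ⟨mem_msupp.mp hα, fun i _ => Finset.mem_univ i⟩
  have hEq : pMonEl n d ⟨⇑α, hmem⟩ = ⟨monomial α 1, monomial_mem_fs hα⟩ := by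
    apply Subtype.ext
    show pMon n ⇑α = monomial α 1
    rw [pMon_eq_monomial, Finsupp.equivFunOnFinite_symm_coe]
  rw [← hEq]
  exact hcoeff ⟨⇑α, hmem⟩

lemma vanish_ext {e : ℕ} (l : PolyR n) (hl : l ∈ formSpace n 1)
    (ψ : Dual ℂ (formSpace n (e+1)))
    (h : ∀ α (hα : α ∈ msupp n e),
      ψ ⟨l * monomial α 1, mul_lin_mem hl (monomial_mem_fs hα)⟩ = 0) :
    ∀ q (hq : q ∈ formSpace n e), ψ ⟨l * q, mul_lin_mem hl hq⟩ = 0 := by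
  intro q hq
  have hq' : q ∈ Submodule.span ℂ ((fun α => (monomial α (1:ℂ))) '' (msupp n e)) := by
    rw [← fs_span]; exact hq
  refine Submodule.span_induction (p := fun x hx =>
      ψ ⟨l * x, mul_lin_mem hl (by rw [fs_span]; exact hx)⟩ = 0) ?_ ?_ ?_ ?_ hq'
  · rintro x ⟨α, hα, rfl⟩
    exact h α hα
  · show ψ ⟨l * 0, mul_lin_mem hl (by rw [fs_span]; exact Submodule.zero_mem _)⟩ = 0
    have h0 : (⟨l * 0, mul_lin_mem hl (by rw [fs_span]; exact Submodule.zero_mem _)⟩ :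
        formSpace n (e+1)) = 0 := Subtype.ext (mul_zero l)
    rw [h0, map_zero]
  · intro x y hx hy hpx hpy
    have : (⟨l * (x + y), mul_lin_mem hl (by rw [fs_span]; exact Submodule.add_mem _ hx hy)⟩ :
        formSpace n (e+1))
        = ⟨l * x, mul_lin_mem hl (by rw [fs_span]; exact hx)⟩
          + ⟨l * y, mul_lin_mem hl (by rw [fs_span]; exact hy)⟩ :=
      Subtype.ext (mul_add l x y)
    rw [this, map_add, hpx, hpy, add_zero]
  · intro a x hx hpx
    have : (⟨l * (a • x), mul_lin_mem hl (by rw [fs_span]; exact Submodule.smul_mem _ a hx)⟩ :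
        formSpace n (e+1))
        = a • ⟨l * x, mul_lin_mem hl (by rw [fs_span]; exact hx)⟩ :=
      Subtype.ext (mul_smul_comm a l x)
    rw [this, map_smul, hpx, smul_zero]

/-! #### the key identity -/

lemma linForm_two_smul (s μ : ℂ) (c v : Fin n → ℂ) :
    linForm n (s • c + μ • v) = s • linForm n c + μ • linForm n v := by
  unfold linForm
  rw [Finset.smul_sum, Finset.smul_sum, ← Finset.sum_add_distrib]
  refine Finset.sum_congr rfl fun i _ => ?_
  simp [add_smul, smul_smul]

lemma key_id {e : ℕ} (ψ : Dual ℂ (formSpace n (e+1))) (c v : Fin n → ℂ)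
    (hkill : ∀ q (hq : q ∈ formSpace n e),
        ψ ⟨linForm n c * q, mul_lin_mem (linForm_mem c) hq⟩ = 0)
    (s μ : ℂ) :
    ψ (pw n (e+1) (s • c + μ • v)) = μ^(e+1) * ψ (pw n (e+1) v) := by
  set lc := linForm n c with hlc
  set lv := linForm n v with hlv
  set D := e + 1 with hD
  set R : PolyR n := ∑ i ∈ Finset.range D,
      (s ^ (i+1) * μ ^ (e - i) * (Nat.choose D (i+1) : ℂ)) • (lc ^ i * lv ^ (e - i)) with hR
  have hRmem : R ∈ formSpace n e := by
    apply Submodule.sum_mem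
    intro i hi
    apply Submodule.smul_mem
    have hle : i ≤ e := by
      have := Finset.mem_range.mp hi; omega
    have := mem_fs_mul (pow_mem_fs (p := lc) (linForm_mem c) (m := i))
      (pow_mem_fs (p := lv) (linForm_mem v) (m := e - i))
    rwa [show i + (e - i) = e by omega] at this
  have hexpand : linForm n (s • c + μ • v) ^ D = μ ^ D • lv ^ D + lc * R := by
    rw [linForm_two_smul, add_pow]
    rw [Finset.sum_range_succ']
    have h0 : (s • lc) ^ 0 * (μ • lv) ^ (D - 0) * (Nat.choose D 0 : PolyR n)
        = μ ^ D • lv ^ D := by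
      simp [smul_pow]
    rw [h0]
    rw [Finset.mul_sum, add_comm]
    congr 1
    refine Finset.sum_congr rfl fun i hi => ?_
    have hiD : i < D := Finset.mem_range.mp hi
    have hsub : D - (i + 1) = e - i := by omega
    rw [hsub]
    simp only [smul_pow, smul_eq_C_mul, map_mul, map_pow, MvPolynomial.C_eq_coe_nat]
    push_cast
    ring
  have hpw : pw n D (s • c + μ • v)
      = μ ^ D • pw n D v + ⟨lc * R, mul_lin_mem (linForm_mem c) hRmem⟩ := by
    apply Subtype.ext
    push_cast [pw]
    exact hexpand
  rw [hpw, map_add, map_smul, hkill R hRmem, add_zero, smul_eq_mul]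

/-! #### submodule products and colon codimension -/

attribute [local instance] fs_fd

lemma map_mulLeft_eq {e : ℕ} (l : PolyR n) :
    Submodule.map (LinearMap.mulLeft ℂ l) (formSpace n e)
      = Submodule.span ℂ {l} * formSpace n e := by
  apply le_antisymm
  · rintro x ⟨q, hq, rfl⟩
    exact Submodule.mul_mem_mul (Submodule.mem_span_singleton_self l) hq
  · rw [Submodule.mul_le]
    intro m hm q hq
    obtain ⟨t, rfl⟩ := Submodule.mem_span_singleton.mp hm
    rw [smul_mul_assoc]
    exact Submodule.smul_mem _ t ⟨q, hq, rfl⟩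

lemma colon_codim {e : ℕ} (U : Submodule ℂ (PolyR n)) (hU : U ≤ formSpace n (e+1))
    (l : PolyR n)
    (hgood : U ⊔ Submodule.span ℂ {l} * formSpace n e = formSpace n (e+1)) :
    finrank ℂ (formSpace n e)
        - finrank ℂ ↥(Submodule.comap (LinearMap.mulLeft ℂ l) U ⊓ formSpace n e)
      = finrank ℂ (formSpace n (e+1)) - finrank ℂ U
      ∧ finrank ℂ ↥(Submodule.comap (LinearMap.mulLeft ℂ l) U ⊓ formSpace n e)
          ≤ finrank ℂ (formSpace n e)
      ∧ finrank ℂ U ≤ finrank ℂ (formSpace n (e+1))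
      ∧ finrank ℂ (formSpace n (e+1)) - finrank ℂ U
          ≤ finrank ℂ (formSpace n e) := by
  classical
  set V := formSpace n (e+1)
  set Ve := formSpace n e
  set T : Ve →ₗ[ℂ] (PolyR n ⧸ U) :=
    (U.mkQ).comp ((LinearMap.mulLeft ℂ l).comp Ve.subtype) with hT
  set T2 : V →ₗ[ℂ] (PolyR n ⧸ U) := (U.mkQ).comp V.subtype with hT2
  have hkerT : LinearMap.ker T = Submodule.comap Ve.subtype
      (Submodule.comap (LinearMap.mulLeft ℂ l) U) := by
    rw [hT, LinearMap.ker_comp, Submodule.ker_mkQ, Submodule.comap_comp]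
  have hcolon : finrank ℂ ↥(Submodule.comap (LinearMap.mulLeft ℂ l) U ⊓ Ve)
      = finrank ℂ (LinearMap.ker T) := by
    have h1 : Submodule.comap Ve.subtype
        (Submodule.comap (LinearMap.mulLeft ℂ l) U ⊓ Ve)
        = LinearMap.ker T := by
      rw [hkerT, Submodule.comap_inf, Submodule.comap_subtype_self, inf_top_eq]
    rw [← h1]
    exact (LinearEquiv.finrank_eq
      (Submodule.comapSubtypeEquivOfLe (inf_le_right
        (a := Submodule.comap (LinearMap.mulLeft ℂ l) U) (b := Ve)))).symm
  have hrangeT : LinearMap.range T = Submodule.map U.mkQ V := by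
    rw [hT, LinearMap.range_comp, LinearMap.range_comp, Submodule.range_subtype]
    rw [map_mulLeft_eq l]
    have hmapU : Submodule.map U.mkQ U = ⊥ := by
      apply le_bot_iff.mp
      rintro x ⟨u, hu, rfl⟩
      simp only [Submodule.mem_bot, Submodule.mkQ_apply]
      exact (Submodule.Quotient.mk_eq_zero _).mpr hu
    calc Submodule.map U.mkQ (Submodule.span ℂ {l} * Ve)
        = Submodule.map U.mkQ U ⊔ Submodule.map U.mkQ (Submodule.span ℂ {l} * Ve) := by
          rw [hmapU, bot_sup_eq]
      _ = Submodule.map U.mkQ (U ⊔ Submodule.span ℂ {l} * Ve) := (Submodule.map_sup _ _ _).symm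
      _ = Submodule.map U.mkQ V := by rw [hgood]
  have hkerT2 : LinearMap.ker T2 = Submodule.comap V.subtype U := by
    rw [hT2, LinearMap.ker_comp, Submodule.ker_mkQ]
  have hrangeT2 : LinearMap.range T2 = Submodule.map U.mkQ V := by
    rw [hT2, LinearMap.range_comp, Submodule.range_subtype]
  have hU' : finrank ℂ U = finrank ℂ (LinearMap.ker T2) := by
    rw [hkerT2]
    exact (LinearEquiv.finrank_eq (Submodule.comapSubtypeEquivOfLe hU)).symm
  have hrn1 := LinearMap.finrank_range_add_finrank_ker T
  have hrn2 := LinearMap.finrank_range_add_finrank_ker T2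
  have hrr : finrank ℂ (LinearMap.range T) = finrank ℂ (LinearMap.range T2) := by
    rw [hrangeT, hrangeT2]
  rw [← hcolon] at hrn1
  rw [← hU'] at hrn2
  omega

/-! #### the Vandermonde determinant -/
section MatrixAux2
open Matrix

lemma detN_ne_zero (D : ℕ) :
    (Matrix.of fun a b : Fin (D+1) => (1 - ((a:ℕ):ℂ) * ((b:ℕ):ℂ))^D).det ≠ 0 := by
  classical
  set f : Fin (D+1) → ℂ := fun a => ((a:ℕ):ℂ) with hf
  set Vand := Matrix.vandermonde f with hV
  set Dg : Matrix (Fin (D+1)) (Fin (D+1)) ℂ :=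
    Matrix.diagonal (fun r => (-1:ℂ)^(r:ℕ) * (Nat.choose D (r:ℕ) : ℂ)) with hD
  have hfact : (Matrix.of fun a b : Fin (D+1) => (1 - f a * f b)^D)
      = Vand * (Dg * Vandᵀ) := by
    ext a b
    rw [Matrix.mul_apply]
    have hterm : ∀ r : Fin (D+1), Vand a r * (Dg * Vandᵀ) r b
        = (-(f a * f b))^(r:ℕ) * 1^(D - (r:ℕ)) * (Nat.choose D (r:ℕ) : ℂ) := by
      intro r
      rw [hD, Matrix.diagonal_mul, Matrix.transpose_apply, hV]
      simp only [Matrix.vandermonde_apply]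
      ring
    rw [Finset.sum_congr rfl (fun r _ => hterm r)]
    rw [Matrix.of_apply]
    have : (1 - f a * f b) ^ D = (-(f a * f b) + 1)^D := by ring_nf
    rw [this, add_pow, ← Fin.sum_univ_eq_sum_range]
  have hvne : Vand.det ≠ 0 := by
    rw [hV, Matrix.det_vandermonde_ne_zero_iff]
    intro a b hab
    have : (a:ℕ) = (b:ℕ) := Nat.cast_injective hab
    exact Fin.val_injective this
  have hdg : Dg.det ≠ 0 := by
    rw [hD, Matrix.det_diagonal]
    apply Finset.prod_ne_zero_iff.mpr
    intro r _
    apply mul_ne_zero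
    · exact pow_ne_zero _ (by norm_num)
    · have : 0 < Nat.choose D (r:ℕ) := Nat.choose_pos (by omega)
      exact_mod_cast this.ne'
  rw [hfact, Matrix.det_mul, Matrix.det_mul, Matrix.det_transpose]
  exact mul_ne_zero hvne (mul_ne_zero hdg hvne)

end MatrixAux2

end AuxAll

theorem stmt11 (n d k : ℕ) (hn : 2 ≤ n) (hd : 2 ≤ d) (hkd : k ≤ d)
    (U : Submodule ℂ (PolyR n)) (hU : U ≤ formSpace n d)
    (hcodim : vcodim n d U = k) :
    ∃ P : MvPolynomial (Fin n) ℂ, P ≠ 0 ∧ ∀ c : Fin n → ℂ, eval c P ≠ 0 →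
      U ⊔ Submodule.span ℂ {linForm n c} * formSpace n (d - 1) = formSpace n d ∧
      vcodim n (d - 1) (colon n d U (linForm n c)) = k := by
  classical
  obtain ⟨e, rfl⟩ : ∃ e, d = e + 1 := ⟨d - 1, by omega⟩
  simp only [Nat.add_sub_cancel]
  have hcolonEq : ∀ l : PolyR n, colon n (e+1) U l
      = Submodule.comap (LinearMap.mulLeft ℂ l) U ⊓ formSpace n e := by
    intro l
    rw [colon, Nat.add_sub_cancel]
  -- basic dimension bookkeeping
  have eqU : finrank ℂ ↥(Submodule.comap (formSpace n (e+1)).subtype U) = finrank ℂ U :=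
    LinearEquiv.finrank_eq (Submodule.comapSubtypeEquivOfLe hU)
  set U' : Submodule ℂ (formSpace n (e+1)) := Submodule.comap (formSpace n (e+1)).subtype U
    with hU'def
  have hUle : finrank ℂ U ≤ finrank ℂ (formSpace n (e+1)) := by
    rw [← eqU]; exact Submodule.finrank_le U'
  have hk : finrank ℂ (formSpace n (e+1)) - finrank ℂ U = k := hcodim
  set W : Submodule ℂ (Dual ℂ (formSpace n (e+1))) := U'.dualAnnihilator with hWdef
  have hWrank : finrank ℂ W = k := by
    have hq := Submodule.finrank_quotient_add_finrank U'
    have he : finrank ℂ ((formSpace n (e+1)) ⧸ U') = finrank ℂ W :=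
      LinearEquiv.finrank_eq (Subspace.quotEquivAnnihilator U')
    omega
  set φ : Basis (Fin k) ℂ W := Module.finBasisOfFinrankEq ℂ W hWrank with hφdef
  set φD : Fin k → Dual ℂ (formSpace n (e+1)) := fun i => ((φ i : W) : Dual ℂ (formSpace n (e+1)))
    with hφD
  have hφkill : ∀ (i : Fin k) (x : formSpace n (e+1)), (x : PolyR n) ∈ U → φD i x = 0 := by
    intro i x hx
    exact (Submodule.mem_dualAnnihilator _).mp (φ i).2 x hx
  -- sums of the basis functionals
  have hWcoe : ∀ aa : Fin k → ℂ,
      ((∑ i, aa i • φ i : W) : Dual ℂ (formSpace n (e+1))) = ∑ i, aa i • φD i := by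
    intro aa
    show W.subtype (∑ i, aa i • φ i) = ∑ i, aa i • φD i
    rw [map_sum]
    exact Finset.sum_congr rfl fun i _ => by rw [map_smul]; rfl
  have hsumapply : ∀ (aa : Fin k → ℂ) (x : formSpace n (e+1)),
      (∑ i, aa i • φD i) x = ∑ i, aa i * φD i x := by
    intro aa x
    rw [LinearMap.sum_apply]
    exact Finset.sum_congr rfl fun i _ => rfl
  have hlinind : ∀ aa : Fin k → ℂ, (∑ i, aa i • φD i) = 0 → aa = 0 := by
    intro aa haa
    have h1 : (∑ i, aa i • φ i : W) = 0 := by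
      have hcc : ((∑ i, aa i • φ i : W) : Dual ℂ (formSpace n (e+1))) = 0 := by
        rw [hWcoe]; exact haa
      exact ZeroMemClass.coe_eq_zero.mp hcc
    funext i
    exact Fintype.linearIndependent_iff.mp φ.linearIndependent aa h1 i
  -- index type and matrices
  have hXmem : ∀ t : Fin n, (X t : PolyR n) ∈ formSpace n 1 := fun t => isHomogeneous_X ℂ t
  set J := {α : Fin n →₀ ℕ // α ∈ msupp n e} with hJ
  set prodEl : Fin n → J → formSpace n (e+1) := fun t j =>
    ⟨X t * monomial j.1 1, mul_lin_mem (hXmem t) (monomial_mem_fs j.2)⟩ with hprodEl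
  set lmonEl : (Fin n → ℂ) → J → formSpace n (e+1) := fun c j =>
    ⟨linForm n c * monomial j.1 1, mul_lin_mem (linForm_mem c) (monomial_mem_fs j.2)⟩
    with hlmonEl
  have hdecomp : ∀ (c : Fin n → ℂ) (j : J), lmonEl c j = ∑ t, c t • prodEl t j := by
    intro c j
    apply Subtype.ext
    show (formSpace n (e+1)).subtype (lmonEl c j)
      = (formSpace n (e+1)).subtype (∑ t, c t • prodEl t j)
    rw [map_sum]
    show linForm n c * monomial j.1 1 = _
    rw [linForm_mul]
    exact Finset.sum_congr rfl fun t _ => by rw [map_smul]; rfl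
  set Mc : (Fin n → ℂ) → Matrix (Fin k) J ℂ :=
    fun c => Matrix.of fun i j => φD i (lmonEl c j) with hMc
  set Mp : Matrix (Fin k) J (PolyR n) :=
    Matrix.of fun i j => ∑ t, C (φD i (prodEl t j)) * X t with hMp
  have hevalM : ∀ c i j, eval c (Mp i j) = Mc c i j := by
    intro c i j
    show eval c (∑ t, C (φD i (prodEl t j)) * X t) = φD i (lmonEl c j)
    rw [map_sum, hdecomp, map_sum]
    refine Finset.sum_congr rfl fun t _ => ?_
    rw [map_mul, eval_C, eval_X, map_smul, smul_eq_mul, mul_comm]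
  -- membership of the generators in the product submodule
  have hmemS : ∀ (c : Fin n → ℂ) (j : J),
      linForm n c * monomial j.1 1 ∈ Submodule.span ℂ {linForm n c} * formSpace n e :=
    fun c j => Submodule.mul_mem_mul (Submodule.mem_span_singleton_self _)
      (monomial_mem_fs j.2)
  have hXle : ∀ c : Fin n → ℂ,
      Submodule.span ℂ {linForm n c} * formSpace n e ≤ formSpace n (e+1) := by
    intro c
    rw [Submodule.mul_le]
    intro m hm q hq
    obtain ⟨t, rfl⟩ := Submodule.mem_span_singleton.mp hm
    rw [smul_mul_assoc]
    exact Submodule.smul_mem _ _ (mul_lin_mem (linForm_mem c) hq)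
  -- rows independent implies surjectivity
  have hGoodOf : ∀ c : Fin n → ℂ,
      (∀ a : Fin k → ℂ, (∀ j, ∑ i, a i * Mc c i j = 0) → a = 0) →
      U ⊔ Submodule.span ℂ {linForm n c} * formSpace n e = formSpace n (e+1) := by
    intro c hri
    by_contra hne
    set S := U ⊔ Submodule.span ℂ {linForm n c} * formSpace n e with hS
    have hSle : S ≤ formSpace n (e+1) := sup_le hU (hXle c)
    set S' := Submodule.comap (formSpace n (e+1)).subtype S with hS'
    have hS'top : S' ≠ ⊤ := by
      intro h
      exact hne (le_antisymm hSle (Submodule.comap_subtype_eq_top.mp h))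
    have hnt : Nontrivial ((formSpace n (e+1)) ⧸ S') :=
      Submodule.Quotient.nontrivial_iff.mpr hS'top
    have hnt2 : Nontrivial S'.dualAnnihilator := by
      obtain ⟨x, y, hxy⟩ := hnt
      exact ⟨(Subspace.quotEquivAnnihilator S') x, (Subspace.quotEquivAnnihilator S') y,
        fun h => hxy ((Subspace.quotEquivAnnihilator S').injective h)⟩
    obtain ⟨ψ', hψ'⟩ := exists_ne (0 : S'.dualAnnihilator)
    have hU'S' : U' ≤ S' := Submodule.comap_mono le_sup_left
    have hψ'W : (ψ' : Dual ℂ (formSpace n (e+1))) ∈ W :=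
      Submodule.dualAnnihilator_anti hU'S' ψ'.2
    set a : Fin k → ℂ := fun i => (φ.repr ⟨(ψ' : Dual ℂ (formSpace n (e+1))), hψ'W⟩) i with ha
    have hsum : (∑ i, a i • φ i : W) = ⟨(ψ' : Dual ℂ (formSpace n (e+1))), hψ'W⟩ :=
      Basis.sum_repr φ _
    have hrel : ∀ j : J, ∑ i, a i * Mc c i j = 0 := by
      intro j
      have h1 : ((∑ i, a i • φ i : W) : Dual ℂ (formSpace n (e+1))) (lmonEl c j) = 0 := by
        rw [hsum]
        apply (Submodule.mem_dualAnnihilator _).mp ψ'.2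
        show ((lmonEl c j : formSpace n (e+1)) : PolyR n) ∈ S
        exact Submodule.mem_sup_right (hmemS c j)
      rw [hWcoe, hsumapply] at h1
      exact h1
    have haz : a = 0 := hri a hrel
    apply hψ'
    have h2 : (∑ i, a i • φ i : W) = 0 := by
      rw [haz]
      simp
    rw [hsum] at h2
    apply Subtype.ext
    have h3 := congrArg Subtype.val h2
    simpa using h3
  -- existence of a good point
  have hex : ∃ c₀ : Fin n → ℂ,
      (∀ a : Fin k → ℂ, (∀ j, ∑ i, a i * Mc c₀ i j = 0) → a = 0) := by
    by_contra hnoc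
    push_neg at hnoc
    set K := FractionRing (PolyR n) with hK
    set ι : PolyR n →+* K := algebraMap (PolyR n) K with hι
    have hιinj : Function.Injective ι := IsFractionRing.injective (PolyR n) K
    have hsm : ∀ (r : PolyR n) (x : K), r • x = ι r * x := fun r x => Algebra.smul_def r x
    set MK : Matrix (Fin k) J K := Mp.map ι with hMK
    have hKdep : ∃ aK : Fin k → K, (∀ j, ∑ i, aK i * MK i j = 0) ∧ aK ≠ 0 := by
      by_contra hcon
      push_neg at hcon
      obtain ⟨CK, hCK⟩ := rows_indep_rightInv MK hcon
      obtain ⟨b, hb⟩ := IsLocalization.exist_integer_multiples_of_finite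
        (nonZeroDivisors (PolyR n)) (fun p : J × Fin k => CK p.1 p.2)
      have hCp0 : ∀ p : J × Fin k, ∃ r : PolyR n, ι r = (b : PolyR n) • CK p.1 p.2 :=
        fun p => hb p
      choose Cp hCp using hCp0
      set q : PolyR n := (b : PolyR n) with hq
      have hqne : q ≠ 0 := nonZeroDivisors.ne_zero b.2
      have hmatid : Mp * (Matrix.of fun (j : J) (i : Fin k) => Cp (j, i))
          = q • (1 : Matrix (Fin k) (Fin k) (PolyR n)) := by
        refine Matrix.ext fun i i' => ?_
        apply hιinj
        have hL : ι ((Mp * Matrix.of fun (j : J) (i : Fin k) => Cp (j, i)) i i')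
            = ι q * (MK * CK) i i' := by
          rw [Matrix.mul_apply, map_sum, Matrix.mul_apply, Finset.mul_sum]
          refine Finset.sum_congr rfl fun j _ => ?_
          rw [map_mul]
          show ι (Mp i j) * ι (Cp (j, i')) = ι q * (MK i j * CK j i')
          rw [hCp (j, i'), hsm]
          show ι (Mp i j) * (ι q * CK j i') = ι q * (ι (Mp i j) * CK j i')
          ring
        rw [hL, hCK]
        rw [Matrix.smul_apply, smul_eq_mul, map_mul]
        congr 1
        by_cases hii : i = i'
        · rw [hii, Matrix.one_apply_eq, Matrix.one_apply_eq, map_one]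
        · rw [Matrix.one_apply_ne hii, Matrix.one_apply_ne hii, map_zero]
      obtain ⟨c₁, hc₁⟩ := exists_eval_ne_zero hqne
      obtain ⟨a1, ha1rel, ha1ne⟩ := hnoc c₁
      apply ha1ne
      refine det_rightInv_rows_indep (Mc c₁)
        (Matrix.of fun (j : J) (i : Fin k) => eval c₁ (Cp (j, i))) ?_ a1 ha1rel
      have hde : Mc c₁ * (Matrix.of fun (j : J) (i : Fin k) => eval c₁ (Cp (j, i)))
          = eval c₁ q • (1 : Matrix (Fin k) (Fin k) ℂ) := by
        have hmm := congrArg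
          (fun (M : Matrix (Fin k) (Fin k) (PolyR n)) => M.map (eval c₁)) hmatid
        rw [Matrix.map_mul] at hmm
        have h1 : Mp.map (eval c₁) = Mc c₁ := by
          ext i j
          exact hevalM c₁ i j
        rw [h1] at hmm
        have h3 : (Matrix.of fun (j : J) (i : Fin k) => Cp (j, i)).map (eval c₁)
            = Matrix.of fun (j : J) (i : Fin k) => eval c₁ (Cp (j, i)) := rfl
        rw [h3] at hmm
        have h2 : ((q • (1 : Matrix (Fin k) (Fin k) (PolyR n))).map (eval c₁))
            = eval c₁ q • (1 : Matrix (Fin k) (Fin k) ℂ) := by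
          ext i i'
          rw [Matrix.map_apply, Matrix.smul_apply, Matrix.smul_apply, smul_eq_mul,
            smul_eq_mul, map_mul]
          congr 1
          by_cases hii : i = i'
          · rw [hii, Matrix.one_apply_eq, Matrix.one_apply_eq, map_one]
          · rw [Matrix.one_apply_ne hii, Matrix.one_apply_ne hii, map_zero]
        rw [h2] at hmm
        exact hmm
      rw [hde, Matrix.det_smul, Matrix.det_one, mul_one]
      exact pow_ne_zero _ hc₁
    obtain ⟨aK, haKrel, haKne⟩ := hKdep
    obtain ⟨b2, hb2⟩ := IsLocalization.exist_integer_multiples_of_finite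
      (nonZeroDivisors (PolyR n)) aK
    have hw0 : ∀ i : Fin k, ∃ r : PolyR n, ι r = (b2 : PolyR n) • aK i := fun i => hb2 i
    choose w hw using hw0
    have hb2ne : ι (b2 : PolyR n) ≠ 0 := fun h =>
      (nonZeroDivisors.ne_zero b2.2) (hιinj (by rw [h, map_zero]))
    have hwrel : ∀ j : J, ∑ i, w i * Mp i j = 0 := by
      intro j
      apply hιinj
      rw [map_sum, map_zero]
      have hterm : ∀ i : Fin k, ι (w i * Mp i j) = ι (b2 : PolyR n) * (aK i * MK i j) := by
        intro i
        rw [map_mul, hw i, hsm]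
        show ι (b2 : PolyR n) * aK i * ι (Mp i j) = ι (b2 : PolyR n) * (aK i * ι (Mp i j))
        ring
      rw [Finset.sum_congr rfl fun i _ => hterm i, ← Finset.mul_sum, haKrel j, mul_zero]
    have hwne : ∃ i₀, w i₀ ≠ 0 := by
      have hex0 : ∃ i₀, aK i₀ ≠ 0 := by
        by_contra hc
        push_neg at hc
        exact haKne (funext hc)
      obtain ⟨i₀, hi₀⟩ := hex0
      refine ⟨i₀, fun h0 => hi₀ ?_⟩
      have hh := hw i₀
      rw [h0, map_zero, hsm] at hh
      rcases mul_eq_zero.mp hh.symm with h | h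
      · exact absurd h hb2ne
      · exact h
    set ψc : (Fin n → ℂ) → Dual ℂ (formSpace n (e+1)) :=
      fun c => ∑ i, eval c (w i) • φD i with hψcdef
    have hψkill : ∀ (c : Fin n → ℂ) q (hq : q ∈ formSpace n e),
        ψc c ⟨linForm n c * q, mul_lin_mem (linForm_mem c) hq⟩ = 0 := by
      intro c
      apply vanish_ext (linForm n c) (linForm_mem c) (ψc c)
      intro α hα
      have h1 : ∑ i, eval c (w i) * Mc c i ⟨α, hα⟩ = 0 := by
        have h2 := congrArg (eval c) (hwrel ⟨α, hα⟩)
        rw [map_sum, map_zero] at h2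
        calc ∑ i, eval c (w i) * Mc c i ⟨α, hα⟩
            = ∑ i, eval c (w i * Mp i ⟨α, hα⟩) := by
              refine Finset.sum_congr rfl fun i _ => ?_
              rw [map_mul, hevalM]
          _ = 0 := h2
      show ψc c (lmonEl c ⟨α, hα⟩) = 0
      simp only [hψcdef]
      rw [hsumapply]
      exact h1
    set Gi : Fin k → PolyR n := fun i => Qpol n (e+1) (φD i) with hGidef
    have hGieval : ∀ i y, eval y (Gi i) = φD i (pw n (e+1) y) := fun i y => eval_Qpol _ _
    set sY : PolyR n →ₐ[ℂ] MvPolynomial ((Fin n) ⊕ (Fin n)) ℂ :=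
      bind₁ (fun t => (X (Sum.inr t) : MvPolynomial ((Fin n) ⊕ (Fin n)) ℂ)) with hsY
    set sC : ℂ → (PolyR n →ₐ[ℂ] MvPolynomial ((Fin n) ⊕ (Fin n)) ℂ) :=
      fun s => bind₁ (fun t =>
        (X (Sum.inl t) + C s * X (Sum.inr t) : MvPolynomial ((Fin n) ⊕ (Fin n)) ℂ)) with hsC
    set γf : ℂ → MvPolynomial ((Fin n) ⊕ (Fin n)) ℂ :=
      fun s => ∑ i, sC s (w i) * sY (Gi i) with hγf
    have hγeval : ∀ (s : ℂ) (uu vv : Fin n → ℂ),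
        eval (Sum.elim uu vv) (γf s)
          = ∑ i, eval (fun t => uu t + s * vv t) (w i) * eval vv (Gi i) := by
      intro s uu vv
      simp only [hγf]
      rw [map_sum]
      refine Finset.sum_congr rfl fun i _ => ?_
      rw [map_mul]
      congr 1
      · simp only [hsC]
        rw [eval_bind]
        have hfn : (fun t : Fin n => eval (Sum.elim uu vv)
            ((X (Sum.inl t) + C s * X (Sum.inr t) : MvPolynomial (Fin n ⊕ Fin n) ℂ)))
            = fun t => uu t + s * vv t := by
          funext t
          simp
        rw [hfn]
      · simp only [hsY]
        rw [eval_bind]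
        have hfn : (fun t : Fin n => eval (Sum.elim uu vv)
            ((X (Sum.inr t) : MvPolynomial (Fin n ⊕ Fin n) ℂ))) = vv := by
          funext t
          simp
        rw [hfn]
    have hγne : ∀ s : ℂ, γf s ≠ 0 := by
      have hHex : ∃ (cc yy : Fin n → ℂ), ∑ i, eval cc (w i) * eval yy (Gi i) ≠ 0 := by
        by_contra hzero
        push_neg at hzero
        obtain ⟨i₀, hi₀⟩ := hwne
        obtain ⟨cstar, hcstar⟩ := exists_eval_ne_zero hi₀
        have hkillpow : ∀ y, (ψc cstar) (pw n (e+1) y) = 0 := by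
          intro y
          simp only [hψcdef]
          rw [hsumapply]
          calc ∑ i, eval cstar (w i) * φD i (pw n (e+1) y)
              = ∑ i, eval cstar (w i) * eval y (Gi i) := by
                refine Finset.sum_congr rfl fun i _ => ?_
                rw [hGieval]
            _ = 0 := hzero cstar y
        have hzero2 : ψc cstar = 0 := dual_zero_of_kill_powers _ hkillpow
        simp only [hψcdef] at hzero2
        have h4 := congrFun (hlinind (fun i => eval cstar (w i)) hzero2) i₀
        simp only [Pi.zero_apply] at h4
        exact hcstar h4
      obtain ⟨cc, yy, hval⟩ := hHex
      intro s h0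
      have h1 := congrArg (eval (Sum.elim (fun t => cc t - s * yy t) yy)) h0
      rw [hγeval, map_zero] at h1
      rw [show (fun t => cc t - s * yy t + s * yy t) = cc from funext fun t => by ring] at h1
      exact hval h1
    set Γ : MvPolynomial ((Fin n) ⊕ (Fin n)) ℂ :=
      ∏ bb : Fin (e+2), γf (((bb : ℕ) : ℂ)) with hΓ
    have hΓne : Γ ≠ 0 := by
      rw [hΓ]
      exact Finset.prod_ne_zero_iff.mpr (fun bb _ => hγne _)
    obtain ⟨pt, hpt⟩ := exists_eval_ne_zero hΓne
    set u : Fin n → ℂ := fun t => pt (Sum.inl t) with hu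
    set v : Fin n → ℂ := fun t => pt (Sum.inr t) with hv
    have hptuv : Sum.elim u v = pt := by funext x; cases x <;> rfl
    set ca : Fin (e+2) → (Fin n → ℂ) := fun a => fun t => u t + ((a:ℕ):ℂ) * v t with hca
    set γv : Fin (e+2) → ℂ := fun a => ∑ i, eval (ca a) (w i) * eval v (Gi i) with hγv
    have hγvne : ∀ a : Fin (e+2), γv a ≠ 0 := by
      intro a
      have h1 : eval pt (γf (((a:ℕ):ℂ))) ≠ 0 := by
        intro h
        apply hpt
        rw [hΓ, map_prod]
        exact Finset.prod_eq_zero (Finset.mem_univ a) h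
      rw [← hptuv, hγeval] at h1
      exact h1
    set A : Matrix (Fin (e+2)) (Fin k) ℂ := Matrix.of fun a i => eval (ca a) (w i) with hA
    set B : Matrix (Fin k) (Fin (e+2)) ℂ := Matrix.of fun i bb =>
      φD i (pw n (e+1) (fun t => ((bb:ℕ):ℂ) * u t + v t)) with hB
    have hABentry : ∀ (a bb : Fin (e+2)), (A * B) a bb
        = γv a * (1 - ((a:ℕ):ℂ) * ((bb:ℕ):ℂ))^(e+1) := by
      intro a bb
      rw [Matrix.mul_apply]
      have h2 : ∑ i, A a i * B i bb
          = ψc (ca a) (pw n (e+1) (fun t => ((bb:ℕ):ℂ) * u t + v t)) := by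
        simp only [hψcdef]
        rw [hsumapply]
        exact Finset.sum_congr rfl fun i _ => rfl
      rw [h2]
      have harg : (fun t => ((bb:ℕ):ℂ) * u t + v t)
          = ((bb:ℕ):ℂ) • (ca a) + (1 - ((a:ℕ):ℂ)*((bb:ℕ):ℂ)) • v := by
        funext t
        simp only [hca, Pi.add_apply, Pi.smul_apply, smul_eq_mul]
        ring
      rw [harg, key_id (ψc (ca a)) (ca a) v (fun q hq => hψkill (ca a) q hq) _ _]
      have h3 : (ψc (ca a)) (pw n (e+1) v) = γv a := by
        simp only [hψcdef]
        rw [hsumapply, hγv]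
        refine Finset.sum_congr rfl fun i _ => ?_
        rw [hGieval]
      rw [h3]
      ring
    have hdet : (A * B).det ≠ 0 := by
      have hform : A * B = Matrix.of fun a bb => γv a *
          ((Matrix.of fun (a bb : Fin (e+2)) =>
            (1 - ((a:ℕ):ℂ) * ((bb:ℕ):ℂ))^(e+1)) a bb) := by
        ext a bb
        rw [hABentry]
        rfl
      rw [hform, Matrix.det_mul_column]
      exact mul_ne_zero (Finset.prod_ne_zero_iff.mpr fun a _ => hγvne a) (detN_ne_zero (e+1))
    have hle := inner_dim_le A B hdet
    omega
  -- assemble the polynomial P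
  obtain ⟨c₀, hc₀⟩ := hex
  obtain ⟨Cm, hCm⟩ := rows_indep_rightInv (Mc c₀) hc₀
  set P := (Mp * Cm.map (C : ℂ →+* PolyR n)).det with hP
  have hevalP : ∀ c, eval c P = (Mc c * Cm).det := by
    intro c
    rw [hP, RingHom.map_det, RingHom.mapMatrix_apply, Matrix.map_mul]
    have h1 : Mp.map (eval c) = Mc c := by
      ext i j
      exact hevalM c i j
    have h2 : (Cm.map (C : ℂ →+* PolyR n)).map (eval c) = Cm := by
      ext j i
      simp [Matrix.map_apply]
    rw [h1, h2]
  have hPne : P ≠ 0 := by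
    intro h
    have h1 := hevalP c₀
    rw [h, map_zero, hCm, Matrix.det_one] at h1
    exact one_ne_zero h1.symm
  refine ⟨P, hPne, ?_⟩
  intro c hPc
  have hri : ∀ a : Fin k → ℂ, (∀ j, ∑ i, a i * Mc c i j = 0) → a = 0 := by
    apply det_rightInv_rows_indep (Mc c) Cm
    rw [← hevalP]
    exact hPc
  have hgood := hGoodOf c hri
  refine ⟨hgood, ?_⟩
  obtain ⟨hcd1, hcd2, hcd3, hcd4⟩ := colon_codim U hU (linForm n c) hgood
  show finrank ℂ (formSpace n e) - finrank ℂ (colon n (e+1) U (linForm n c)) = k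
  rw [hcolonEq]
  omega
end

section
/- Let U ⊆ A(n)_d be a linear subspace of codimension k and let H = (h_i) be the Hilbert function of the ideal ⟨U⟩ ⊆ A(n). Then for every l ≥ 0: (i) the Hilbert function K = (k_i) of the ideal generated by U^(l) in A(n+l) satisfies k_i = dim A(n+l)_i for 0 ≤ i ≤ d−1 and k_i = h_i for i ≥ d; (ii) codim_{A(n+l)_{2d}} (U^(l))² = codim_{A(n)_{2d}} U² + l·h_{2d−1}. -/
open MvPolynomial Module

/-- One-step lifting `U ↦ U⁽¹⁾ = x_{n+1}·A(n+1)_{d-1} ⊕ U ⊆ A(n+1)_d`. -/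
noncomputable def lift1 (n d : ℕ) (U : Submodule ℂ (PolyR n)) :
    Submodule ℂ (PolyR (n + 1)) :=
  Submodule.span ℂ {(X (Fin.last n) : PolyR (n + 1))} * formSpace (n + 1) (d - 1) ⊔
    Submodule.map (MvPolynomial.rename (Fin.castSucc : Fin n → Fin (n + 1))).toLinearMap U

/-- Iterated lifting `U⁽ˡ⁾ ⊆ A(n+l)_d`. -/
noncomputable def liftIter (n d : ℕ) (U : Submodule ℂ (PolyR n)) :
    (l : ℕ) → Submodule ℂ (PolyR (n + l))
  | 0 => U
  | l + 1 => lift1 (n + l) d (liftIter n d U l)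

/-- The degree-`i` component of a homogeneous ideal, as a `ℂ`-subspace. -/
noncomputable def idealComp (n : ℕ) (I : Ideal (PolyR n)) (i : ℕ) :
    Submodule ℂ (PolyR n) :=
  Submodule.restrictScalars ℂ I ⊓ formSpace n i

/-- The Hilbert function `h_I(i) = dim (A/I)_i`. -/
noncomputable def hilb (n : ℕ) (I : Ideal (PolyR n)) (i : ℕ) : ℕ :=
  finrank ℂ (formSpace n i) - finrank ℂ (idealComp n I i)

instance formSpace_fd (n i : ℕ) : FiniteDimensional ℂ (formSpace n i) := by
  have h : formSpace n i ≤ restrictTotalDegree (Fin n) ℂ i := by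
    intro p hp
    rw [mem_restrictTotalDegree]
    rcases eq_or_ne p 0 with rfl | h0
    · simp
    · exact (((mem_homogeneousSubmodule _ _).mp hp).totalDegree h0).le
  exact Submodule.finiteDimensional_of_le h

lemma formSpace_le_of_monomials {n i : ℕ} {V : Submodule ℂ (PolyR n)}
    (h : ∀ s : Fin n →₀ ℕ, s.degree = i → ∀ c : ℂ, monomial s c ∈ V) : formSpace n i ≤ V := by
  intro p hp
  rw [p.as_sum]
  refine Submodule.sum_mem _ fun s hs => ?_
  have := hp (mem_support_iff.mp hs)
  exact h s (by rw [Finsupp.degree_eq_weight_one]; exact this) _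

lemma formSpace_succ_le (n c : ℕ) : formSpace n (c+1) ≤ formSpace n 1 * formSpace n c := by
  refine formSpace_le_of_monomials (fun s hs c0 => ?_)
  have hs0 : s ≠ 0 := by
    intro h; rw [h, map_zero] at hs; exact (Nat.succ_ne_zero c) hs.symm
  obtain ⟨i, hi⟩ : ∃ i, s i ≠ 0 := by
    by_contra hc; push_neg at hc; exact hs0 (Finsupp.ext fun j => hc j)
  have hle : Finsupp.single i 1 ≤ s := Finsupp.single_le_iff.mpr (Nat.one_le_iff_ne_zero.mpr hi)
  have hsub : Finsupp.single i 1 + (s - Finsupp.single i 1) = s := add_tsub_cancel_of_le hle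
  have heq : monomial s c0 = X i * monomial (s - Finsupp.single i 1) c0 := by
    rw [X, monomial_mul, one_mul, hsub]
  have hdeg : (s - Finsupp.single i 1).degree = c := by
    have := congrArg Finsupp.degree hsub
    rw [Finsupp.degree_eq_weight_one] at this hs ⊢
    rw [map_add] at this
    have h1 : (Finsupp.weight 1) (Finsupp.single i 1) = 1 := by
      simp [Finsupp.weight_apply, Finsupp.sum_single_index]
    have h1' : (Finsupp.weight fun _ => (1:ℕ)) (Finsupp.single i 1) = 1 := h1
    omega
  rw [heq]
  exact Submodule.mul_mem_mul (isHomogeneous_X _ _) (isHomogeneous_monomial _ hdeg)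

lemma formSpace_mul (n a b : ℕ) : formSpace n a * formSpace n b = formSpace n (a+b) := by
  refine le_antisymm (homogeneousSubmodule_mul a b) ?_
  induction a with
  | zero =>
    have h1 : (1 : Submodule ℂ (PolyR n)) ≤ formSpace n 0 :=
      Submodule.one_le.mpr (isHomogeneous_one _ _)
    calc formSpace n (0+b) = 1 * formSpace n b := by rw [one_mul, Nat.zero_add]
    _ ≤ formSpace n 0 * formSpace n b := mul_le_mul' h1 le_rfl
  | succ a ih =>
    calc formSpace n (a+1+b) = formSpace n ((a+b)+1) := by ring_nf
    _ ≤ formSpace n 1 * formSpace n (a+b) := formSpace_succ_le n _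
    _ ≤ formSpace n 1 * (formSpace n a * formSpace n b) := mul_le_mul' le_rfl ih
    _ = (formSpace n 1 * formSpace n a) * formSpace n b := (mul_assoc _ _ _).symm
    _ ≤ formSpace n (1+a) * formSpace n b :=
        mul_le_mul' (homogeneousSubmodule_mul 1 a) le_rfl
    _ = formSpace n (a+1) * formSpace n b := by rw [Nat.add_comm]


lemma homogeneousComponent_mul_homogeneous {n d i : ℕ} (a u : PolyR n)
    (hu : u ∈ formSpace n d) :
    homogeneousComponent i (a * u) =
      if d ≤ i then homogeneousComponent (i - d) a * u else 0 := by
  conv_lhs => rw [← sum_homogeneousComponent a, Finset.sum_mul, map_sum]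
  have key : ∀ j, homogeneousComponent i (homogeneousComponent j a * u)
      = if j = i - d ∧ d ≤ i then homogeneousComponent j a * u else 0 := by
    intro j
    have hj : homogeneousComponent j a * u ∈ formSpace n (j + d) :=
      homogeneousSubmodule_mul j d
        (Submodule.mul_mem_mul (homogeneousComponent_isHomogeneous j a) hu)
    rw [homogeneousComponent_of_mem hj]
    by_cases h : i = j + d
    · rw [if_pos h, if_pos ⟨by omega, by omega⟩]
    · rw [if_neg h]
      by_cases h2 : j = i - d ∧ d ≤ i
      · exact absurd (by omega : i = j + d) h
      · rw [if_neg h2]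
  simp_rw [key]
  by_cases hdi : d ≤ i
  · simp only [hdi, and_true, if_pos]
    rw [Finset.sum_ite_eq' (Finset.range (a.totalDegree + 1)) (i-d)
      (fun j => homogeneousComponent j a * u)]
    by_cases hmem : i - d ∈ Finset.range (a.totalDegree + 1)
    · rw [if_pos hmem]
    · rw [if_neg hmem, homogeneousComponent_eq_zero, zero_mul]
      simp only [Finset.mem_range] at hmem
      omega
  · simp [hdi]

lemma restrictScalars_span (n : ℕ) (U : Submodule ℂ (PolyR n)) :
    Submodule.restrictScalars ℂ (Ideal.span (U : Set (PolyR n)))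
      = (⊤ : Submodule ℂ (PolyR n)) * U := by
  apply le_antisymm
  · intro p hp
    refine Submodule.span_induction ?_ ?_ ?_ ?_ hp
    · intro u hu
      simpa using Submodule.mul_mem_mul (Submodule.mem_top (x := (1 : PolyR n))) hu
    · exact Submodule.zero_mem _
    · intro x y _ _ hx hy; exact Submodule.add_mem _ hx hy
    · intro r x _ hx
      refine Submodule.mul_induction_on hx (fun a _ u hu => ?_) (fun x y hx hy => ?_)
      · have : r • (a * u) = (r * a) * u := by rw [smul_eq_mul, mul_assoc]
        rw [this]
        exact Submodule.mul_mem_mul Submodule.mem_top hu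
      · rw [smul_add]; exact Submodule.add_mem _ hx hy
  · rw [Submodule.mul_le]
    intro a _ u hu
    exact Ideal.mul_mem_left _ a (Ideal.subset_span hu)

lemma idealComp_span_lt {n d i : ℕ} (U : Submodule ℂ (PolyR n)) (hU : U ≤ formSpace n d)
    (hi : i < d) : idealComp n (Ideal.span (U : Set (PolyR n))) i = ⊥ := by
  rw [eq_bot_iff]
  rintro p ⟨hp1, hp2⟩
  have hp1' : p ∈ (⊤ : Submodule ℂ (PolyR n)) * U := by
    rw [← restrictScalars_span]; exact hp1
  have hcomp : homogeneousComponent i p = 0 := by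
    refine Submodule.mul_induction_on hp1' (fun a _ u hu => ?_) (fun x y hx hy => ?_)
    · rw [homogeneousComponent_mul_homogeneous a u (hU hu), if_neg (by omega)]
    · rw [map_add, hx, hy, add_zero]
  have h3 := homogeneousComponent_of_mem (m := i) (n := i) hp2
  rw [if_pos rfl] at h3
  rw [← h3, hcomp]; exact Submodule.zero_mem _

lemma idealComp_span_ge {n d i : ℕ} (U : Submodule ℂ (PolyR n)) (hU : U ≤ formSpace n d)
    (hi : d ≤ i) :
    idealComp n (Ideal.span (U : Set (PolyR n))) i = formSpace n (i - d) * U := by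
  apply le_antisymm
  · rintro p ⟨hp1, hp2⟩
    have hp1' : p ∈ (⊤ : Submodule ℂ (PolyR n)) * U := by
      rw [← restrictScalars_span]; exact hp1
    have hcomp : homogeneousComponent i p ∈ formSpace n (i - d) * U := by
      refine Submodule.mul_induction_on hp1' (fun a _ u hu => ?_) (fun x y hx hy => ?_)
      · rw [homogeneousComponent_mul_homogeneous a u (hU hu), if_pos hi]
        exact Submodule.mul_mem_mul (homogeneousComponent_isHomogeneous _ a) hu
      · rw [map_add]; exact Submodule.add_mem _ hx hy
    have h3 := homogeneousComponent_of_mem (m := i) (n := i) hp2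
    rw [if_pos rfl] at h3
    rwa [h3] at hcomp
  · refine le_inf ?_ ?_
    · rw [Submodule.mul_le]
      intro f _ u hu
      exact Ideal.mul_mem_left _ f (Ideal.subset_span hu)
    · have : formSpace n (i-d) * U ≤ formSpace n (i-d) * formSpace n d :=
        mul_le_mul' le_rfl hU
      rw [formSpace_mul] at this
      rwa [Nat.sub_add_cancel hi] at this

lemma formSpace_zero (n : ℕ) : formSpace n 0 = 1 := by
  apply le_antisymm
  · refine formSpace_le_of_monomials (fun s hs c => ?_)
    have hs0 : s = 0 := by
      rwa [Finsupp.degree_eq_zero_iff] at hs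
    rw [hs0]
    have : monomial (0 : Fin n →₀ ℕ) c = c • (1 : PolyR n) := by
      rw [smul_eq_C_mul, mul_one, C_apply]
    rw [this]
    exact Submodule.smul_mem _ c (Submodule.one_le.mp le_rfl)
  · rw [Submodule.one_le]
    exact isHomogeneous_one _ _

noncomputable def renL (n : ℕ) : PolyR n →ₗ[ℂ] PolyR (n+1) :=
  (MvPolynomial.rename (Fin.castSucc : Fin n → Fin (n + 1))).toLinearMap

noncomputable def XS (n : ℕ) : Submodule ℂ (PolyR (n+1)) :=
  Submodule.span ℂ {(X (Fin.last n) : PolyR (n + 1))}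

lemma renL_apply (n : ℕ) (p : PolyR n) :
    renL n p = rename (Fin.castSucc : Fin n → Fin (n + 1)) p := rfl

lemma map_renL_formSpace_le (n i : ℕ) :
    Submodule.map (renL n) (formSpace n i) ≤ formSpace (n+1) i := by
  rintro p ⟨q, hq, rfl⟩
  exact (IsHomogeneous.rename_isHomogeneous hq : IsHomogeneous _ i)

lemma XS_le_formSpace_one (n : ℕ) : XS n ≤ formSpace (n+1) 1 := by
  rw [XS, Submodule.span_le, Set.singleton_subset_iff]
  exact isHomogeneous_X _ _

lemma XS_mul_le (n i : ℕ) : XS n * formSpace (n+1) i ≤ formSpace (n+1) (1+i) := by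
  have := mul_le_mul' (XS_le_formSpace_one n) (le_refl (formSpace (n+1) i))
  rwa [formSpace_mul] at this

lemma mem_XS_mul {n : ℕ} {W : Submodule ℂ (PolyR (n+1))} {p : PolyR (n+1)} :
    p ∈ XS n * W ↔ ∃ w ∈ W, X (Fin.last n) * w = p :=
  Submodule.mem_span_singleton_mul

lemma formSpace_succ_decomp (n i : ℕ) :
    formSpace (n+1) (i+1) =
      Submodule.map (renL n) (formSpace n (i+1)) ⊔ XS n * formSpace (n+1) i := by
  apply le_antisymm
  · refine formSpace_le_of_monomials (fun s hs c => ?_)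
    by_cases h : s (Fin.last n) = 0
    · have hsupp : ↑s.support ⊆ Set.range (Fin.castSucc : Fin n → Fin (n+1)) := by
        intro j hj
        have hne : j ≠ Fin.last n := by
          intro hjl
          rw [Finset.mem_coe, Finsupp.mem_support_iff, hjl] at hj
          exact hj h
        rcases Fin.exists_castSucc_eq.mpr hne with ⟨y, hy⟩
        exact ⟨y, hy⟩
      set s' := Finsupp.comapDomain (Fin.castSucc : Fin n → Fin (n+1)) s
        (Fin.castSucc_injective n).injOn with hs'
      have hmap : Finsupp.mapDomain (Fin.castSucc : Fin n → Fin (n+1)) s' = s :=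
        Finsupp.mapDomain_comapDomain _ (Fin.castSucc_injective n) s hsupp
      have hdeg : s'.degree = i + 1 := by
        rw [← hs, ← hmap]
        simp only [Finsupp.degree_eq_weight_one]
        rw [Finsupp.weight_apply, Finsupp.weight_apply,
          Finsupp.sum_mapDomain_index (fun b => by simp) (fun b m₁ m₂ => by simp [add_smul])]
      have : monomial s c = renL n (monomial s' c) := by
        rw [renL_apply, rename_monomial, hmap]
      rw [this]
      exact le_sup_left (α := Submodule ℂ (PolyR (n+1)))
        ⟨monomial s' c, isHomogeneous_monomial _ hdeg, rfl⟩
    · have hle : Finsupp.single (Fin.last n) 1 ≤ s :=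
        Finsupp.single_le_iff.mpr (Nat.one_le_iff_ne_zero.mpr h)
      have hsub : Finsupp.single (Fin.last n) 1 + (s - Finsupp.single (Fin.last n) 1) = s :=
        add_tsub_cancel_of_le hle
      have heq : monomial s c = X (Fin.last n) * monomial (s - Finsupp.single (Fin.last n) 1) c := by
        rw [X, monomial_mul, one_mul, hsub]
      have hdeg : (s - Finsupp.single (Fin.last n) 1).degree = i := by
        have h2 := congrArg Finsupp.degree hsub
        rw [Finsupp.degree_eq_weight_one] at h2 hs ⊢
        rw [map_add] at h2
        have h1 : (Finsupp.weight 1) (Finsupp.single (Fin.last n) 1) = 1 := by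
          simp [Finsupp.weight_apply, Finsupp.sum_single_index]
        have h1' : (Finsupp.weight fun _ => (1:ℕ)) (Finsupp.single (Fin.last n) 1) = 1 := h1
        omega
      rw [heq]
      exact le_sup_right (α := Submodule ℂ (PolyR (n+1)))
        (Submodule.mul_mem_mul (Submodule.mem_span_singleton_self _)
          (isHomogeneous_monomial _ hdeg))
  · refine sup_le ?_ ?_
    · exact map_renL_formSpace_le n (i+1)
    · have := XS_mul_le n i
      rwa [Nat.add_comm 1 i] at this

lemma map_renL_inf_XS_mul (n : ℕ) (V : Submodule ℂ (PolyR n)) (W : Submodule ℂ (PolyR (n+1))) :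
    Submodule.map (renL n) V ⊓ XS n * W = ⊥ := by
  rw [eq_bot_iff]
  rintro p ⟨⟨q, hq, rfl⟩, hp2⟩
  rcases mem_XS_mul.mp hp2 with ⟨w, hw, hxw⟩
  have hz : renL n q = 0 := by
    ext s
    rw [coeff_zero]
    by_cases hl : s (Fin.last n) = 0
    · have h0 : coeff s (X (Fin.last n) * w) = 0 := by
        rw [X, coeff_monomial_mul', if_neg]
        intro hle
        have := Finsupp.single_le_iff.mp hle
        omega
      calc coeff s (renL n q) = coeff s (X (Fin.last n) * w) := by rw [hxw]
      _ = 0 := h0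
    · rw [renL_apply]
      apply coeff_rename_eq_zero
      intro u hu
      exfalso
      have hnr : Fin.last n ∉ Set.range (Fin.castSucc : Fin n → Fin (n+1)) := by
        rintro ⟨y, hy⟩
        exact (Fin.castSucc_lt_last y).ne hy
      have := Finsupp.mapDomain_notin_range u (Fin.last n) hnr
      rw [hu] at this
      exact hl this
  simp [hz]

lemma mulLeft_X_injective (n : ℕ) :
    Function.Injective (LinearMap.mulLeft ℂ (X (Fin.last n) : PolyR (n+1))) := by
  intro a b h
  simp only [LinearMap.mulLeft_apply] at h
  exact mul_left_cancel₀ (X_ne_zero _) h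

lemma XS_mul_eq_map (n : ℕ) (W : Submodule ℂ (PolyR (n+1))) :
    XS n * W = Submodule.map (LinearMap.mulLeft ℂ (X (Fin.last n) : PolyR (n+1))) W := by
  ext p
  rw [mem_XS_mul]
  constructor
  · rintro ⟨w, hw, rfl⟩; exact ⟨w, hw, rfl⟩
  · rintro ⟨w, hw, rfl⟩; exact ⟨w, hw, rfl⟩

lemma finrank_XS_mul (n : ℕ) (W : Submodule ℂ (PolyR (n+1))) :
    finrank ℂ (XS n * W : Submodule ℂ (PolyR (n+1))) = finrank ℂ W := by
  rw [XS_mul_eq_map]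
  exact (LinearEquiv.finrank_eq (Submodule.equivMapOfInjective _ (mulLeft_X_injective n) W)).symm

lemma renL_injective (n : ℕ) : Function.Injective (renL n) := by
  intro a b h
  exact rename_injective _ (Fin.castSucc_injective n) h

lemma finrank_map_renL (n : ℕ) (V : Submodule ℂ (PolyR n)) :
    finrank ℂ (Submodule.map (renL n) V) = finrank ℂ V :=
  (LinearEquiv.finrank_eq (Submodule.equivMapOfInjective _ (renL_injective n) V)).symm

lemma finrank_sup_disjoint {m : ℕ} (V W : Submodule ℂ (PolyR m)) (h : V ⊓ W = ⊥)
    [FiniteDimensional ℂ V] [FiniteDimensional ℂ W] :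
    finrank ℂ (V ⊔ W : Submodule ℂ (PolyR m)) = finrank ℂ V + finrank ℂ W := by
  have h2 := Submodule.finrank_sup_add_finrank_inf_eq V W
  rw [h] at h2
  simpa using h2


lemma lift1_eq (n d : ℕ) (U : Submodule ℂ (PolyR n)) :
    lift1 n d U = XS n * formSpace (n+1) (d-1) ⊔ Submodule.map (renL n) U := rfl

lemma fd_of_le_formSpace {m i : ℕ} {V : Submodule ℂ (PolyR m)} (h : V ≤ formSpace m i) :
    FiniteDimensional ℂ V :=
  Submodule.finiteDimensional_of_le h

lemma map_renL_mul (n : ℕ) (V W : Submodule ℂ (PolyR n)) :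
    Submodule.map (renL n) (V * W) = Submodule.map (renL n) V * Submodule.map (renL n) W :=
  Submodule.map_mul V W (MvPolynomial.rename (Fin.castSucc : Fin n → Fin (n + 1)))

lemma lift1_le {n d : ℕ} {U : Submodule ℂ (PolyR n)} (hU : U ≤ formSpace n d) (hd : 1 ≤ d) :
    lift1 n d U ≤ formSpace (n+1) d := by
  rw [lift1_eq]
  refine sup_le ?_ ?_
  · have := XS_mul_le n (d-1)
    have he : 1 + (d-1) = d := by omega
    rwa [he] at this
  · exact le_trans (Submodule.map_mono hU) (map_renL_formSpace_le n d)

set_option maxHeartbeats 1000000 in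
lemma lift1_idealComp {n d i : ℕ} {U : Submodule ℂ (PolyR n)} (hU : U ≤ formSpace n d)
    (hd : 1 ≤ d) (hi : d ≤ i) :
    idealComp (n+1) (Ideal.span ((lift1 n d U : Submodule ℂ (PolyR (n+1))) : Set (PolyR (n+1)))) i =
      XS n * formSpace (n+1) (i-1) ⊔
        Submodule.map (renL n) (idealComp n (Ideal.span (U : Set (PolyR n))) i) := by
  rw [idealComp_span_ge _ (lift1_le hU hd) hi, idealComp_span_ge U hU hi, lift1_eq,
    Submodule.mul_sup]
  have hA : formSpace (n+1) (i-d) * (XS n * formSpace (n+1) (d-1)) =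
      XS n * formSpace (n+1) (i-1) := by
    rw [← mul_assoc, mul_comm (formSpace (n+1) (i-d)) (XS n), mul_assoc, formSpace_mul]
    have he : i - d + (d - 1) = i - 1 := by omega
    rw [he]
  rw [hA]
  rcases Nat.lt_or_ge i (d+1) with hid | hid
  · have he : i - d = 0 := by omega
    rw [he, formSpace_zero, one_mul, formSpace_zero, one_mul]
  · have he : i - d = (i - d - 1) + 1 := by omega
    rw [he, formSpace_succ_decomp n (i-d-1), Submodule.sup_mul, ← map_renL_mul]
    have habs : XS n * formSpace (n+1) (i-d-1) * Submodule.map (renL n) U ≤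
        XS n * formSpace (n+1) (i-1) := by
      rw [mul_assoc]
      refine mul_le_mul' le_rfl ?_
      have h1 : formSpace (n+1) (i-d-1) * Submodule.map (renL n) U ≤
          formSpace (n+1) (i-d-1) * formSpace (n+1) d :=
        mul_le_mul' le_rfl (le_trans (Submodule.map_mono hU) (map_renL_formSpace_le n d))
      rw [formSpace_mul] at h1
      have he2 : i - d - 1 + d = i - 1 := by omega
      rwa [he2] at h1
    set A := XS n * formSpace (n+1) (i-1) with hA'
    set B := Submodule.map (renL n) (formSpace n (i-d-1+1) * U) with hB'
    set C := XS n * formSpace (n+1) (i-d-1) * Submodule.map (renL n) U with hC'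
    have h1 : C ≤ A ⊔ B := le_trans habs le_sup_left
    have h2 : B ≤ A ⊔ B := le_sup_right
    have h3 : A ≤ A ⊔ B := le_sup_left
    have h4 : B ⊔ C ≤ A ⊔ B := sup_le h2 h1
    have h5 : A ⊔ (B ⊔ C) ≤ A ⊔ B := sup_le h3 h4
    have h6 : A ⊔ B ≤ A ⊔ (B ⊔ C) := sup_le le_sup_left (le_trans le_sup_left le_sup_right)
    exact le_antisymm h5 h6


lemma hilb_low {m d i : ℕ} {V : Submodule ℂ (PolyR m)} (hV : V ≤ formSpace m d) (hi : i < d) :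
    hilb m (Ideal.span (V : Set (PolyR m))) i = finrank ℂ (formSpace m i) := by
  rw [hilb, idealComp_span_lt V hV hi, finrank_bot, Nat.sub_zero]

lemma finrank_XS_sup_ren {n : ℕ} (W : Submodule ℂ (PolyR (n+1))) (V : Submodule ℂ (PolyR n))
    [FiniteDimensional ℂ W] [FiniteDimensional ℂ V] :
    finrank ℂ (XS n * W ⊔ Submodule.map (renL n) V : Submodule ℂ (PolyR (n+1))) =
      finrank ℂ W + finrank ℂ V := by
  rw [sup_comm]
  haveI : FiniteDimensional ℂ (Submodule.map (renL n) V) :=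
    FiniteDimensional.of_injective (Submodule.equivMapOfInjective _ (renL_injective n) V).symm.toLinearMap
      (Submodule.equivMapOfInjective _ (renL_injective n) V).symm.injective
  haveI : FiniteDimensional ℂ (XS n * W : Submodule ℂ (PolyR (n+1))) := by
    rw [XS_mul_eq_map]
    exact FiniteDimensional.of_injective
      (Submodule.equivMapOfInjective _ (mulLeft_X_injective n) W).symm.toLinearMap
      (Submodule.equivMapOfInjective _ (mulLeft_X_injective n) W).symm.injective
  rw [finrank_sup_disjoint _ _ (map_renL_inf_XS_mul n V W), finrank_map_renL, finrank_XS_mul,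
    add_comm]

lemma finrank_formSpace_succ (m i : ℕ) :
    finrank ℂ (formSpace (m+1) (i+1)) =
      finrank ℂ (formSpace (m+1) i) + finrank ℂ (formSpace m (i+1)) := by
  rw [formSpace_succ_decomp, sup_comm]
  rw [finrank_XS_sup_ren]

lemma hilb_lift1_high {n d i : ℕ} {U : Submodule ℂ (PolyR n)} (hU : U ≤ formSpace n d)
    (hd : 1 ≤ d) (hi : d ≤ i) :
    hilb (n+1) (Ideal.span ((lift1 n d U : Submodule ℂ (PolyR (n+1))) : Set (PolyR (n+1)))) i =
      hilb n (Ideal.span (U : Set (PolyR n))) i := by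
  haveI : FiniteDimensional ℂ (idealComp n (Ideal.span (U : Set (PolyR n))) i) :=
    fd_of_le_formSpace (inf_le_right : _ ≤ formSpace n i)
  rw [hilb, hilb, lift1_idealComp hU hd hi, finrank_XS_sup_ren]
  have hdim : finrank ℂ (formSpace (n+1) i) =
      finrank ℂ (formSpace (n+1) (i-1)) + finrank ℂ (formSpace n i) := by
    have := finrank_formSpace_succ n (i-1)
    have he : i - 1 + 1 = i := by omega
    rwa [he] at this
  have hle : finrank ℂ (idealComp n (Ideal.span (U : Set (PolyR n))) i) ≤
      finrank ℂ (formSpace n i) := Submodule.finrank_mono inf_le_right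
  omega

lemma lift1_sq {n d : ℕ} {U : Submodule ℂ (PolyR n)} (hU : U ≤ formSpace n d) (hd : 2 ≤ d) :
    lift1 n d U * lift1 n d U =
      XS n * idealComp (n+1)
          (Ideal.span ((lift1 n d U : Submodule ℂ (PolyR (n+1))) : Set (PolyR (n+1)))) (2*d-1) ⊔
        Submodule.map (renL n) (U * U) := by
  have hd1 : 1 ≤ d := by omega
  set A := XS n * formSpace (n+1) (d-1) with hAdef
  set B := Submodule.map (renL n) U with hBdef
  have hlift : lift1 n d U = A ⊔ B := lift1_eq n d U
  set P := XS n * (XS n * formSpace (n+1) (2*d-2)) with hPdef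
  set Q := XS n * Submodule.map (renL n) (formSpace n (d-1) * U) with hQdef
  set R := Submodule.map (renL n) (U * U) with hRdef
  -- compute C
  have hC : idealComp (n+1)
      (Ideal.span ((lift1 n d U : Submodule ℂ (PolyR (n+1))) : Set (PolyR (n+1)))) (2*d-1) =
      XS n * formSpace (n+1) (2*d-2) ⊔
        Submodule.map (renL n) (formSpace n (d-1) * U) := by
    have h1 := lift1_idealComp hU hd1 (by omega : d ≤ 2*d-1)
    have he1 : 2*d-1-1 = 2*d-2 := by omega
    have h2 : idealComp n (Ideal.span (U : Set (PolyR n))) (2*d-1) = formSpace n (d-1) * U := by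
      rw [idealComp_span_ge U hU (by omega : d ≤ 2*d-1)]
      have he : 2*d-1-d = d-1 := by omega
      rw [he]
    rw [h1, he1, h2]
  have hXC : XS n * (XS n * formSpace (n+1) (2*d-2) ⊔
      Submodule.map (renL n) (formSpace n (d-1) * U)) = P ⊔ Q := by
    rw [Submodule.mul_sup]
  rw [hC, hXC, hlift]
  -- now prove (A ⊔ B) * (A ⊔ B) = P ⊔ Q ⊔ R
  have hAA : A * A = P := by
    have : (XS n * formSpace (n+1) (d-1)) * (XS n * formSpace (n+1) (d-1)) =
        XS n * (XS n * (formSpace (n+1) (d-1) * formSpace (n+1) (d-1))) := by ring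
    rw [hAdef, hPdef, this, formSpace_mul]
    have he : d - 1 + (d-1) = 2*d-2 := by omega
    rw [he]
  have hBB : B * B = R := by rw [hBdef, hRdef, ← map_renL_mul]
  have hdecomp : formSpace (n+1) (d-1) =
      Submodule.map (renL n) (formSpace n (d-1)) ⊔ XS n * formSpace (n+1) (d-2) := by
    have := formSpace_succ_decomp n (d-2)
    have he : d - 2 + 1 = d - 1 := by omega
    rwa [he] at this
  have hsubB : formSpace (n+1) (d-2) * B ≤ formSpace (n+1) (2*d-2) := by
    have h1 : formSpace (n+1) (d-2) * B ≤ formSpace (n+1) (d-2) * formSpace (n+1) d :=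
      mul_le_mul' le_rfl
        (le_trans (Submodule.map_mono hU) (map_renL_formSpace_le n d))
    rw [formSpace_mul] at h1
    have he : d - 2 + d = 2*d-2 := by omega
    rwa [he] at h1
  have hAB : A * B = Q ⊔ XS n * (XS n * (formSpace (n+1) (d-2) * B)) := by
    calc A * B = XS n * (formSpace (n+1) (d-1) * B) := by rw [hAdef, mul_assoc]
    _ = XS n * ((Submodule.map (renL n) (formSpace n (d-1)) ⊔ XS n * formSpace (n+1) (d-2)) * B) := by
        rw [← hdecomp]
    _ = XS n * (Submodule.map (renL n) (formSpace n (d-1)) * B ⊔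
          XS n * (formSpace (n+1) (d-2) * B)) := by rw [Submodule.sup_mul, mul_assoc]
    _ = Q ⊔ XS n * (XS n * (formSpace (n+1) (d-2) * B)) := by
        rw [Submodule.mul_sup, hQdef, hBdef, ← map_renL_mul]
  have hABle : A * B ≤ Q ⊔ P := by
    rw [hAB]
    have h2 : XS n * (XS n * (formSpace (n+1) (d-2) * B)) ≤ P := by
      rw [hPdef]
      exact mul_le_mul' le_rfl (mul_le_mul' le_rfl hsubB)
    have h3 : Q ≤ Q ⊔ P := le_sup_left
    have h4 : XS n * (XS n * (formSpace (n+1) (d-2) * B)) ≤ Q ⊔ P := le_trans h2 le_sup_right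
    exact sup_le h3 h4
  have hQle : Q ≤ A * B := by
    rw [hAB]
    exact le_sup_left
  have hexp : (A ⊔ B) * (A ⊔ B) = (A * A ⊔ A * B) ⊔ (B * A ⊔ B * B) := by
    rw [Submodule.sup_mul, Submodule.mul_sup, Submodule.mul_sup]
  have hBA : B * A = A * B := mul_comm B A
  rw [hexp, hAA, hBB, hBA]
  refine le_antisymm ?_ ?_
  · have h1 : P ≤ P ⊔ Q ⊔ R := le_trans le_sup_left le_sup_left
    have h2 : A * B ≤ P ⊔ Q ⊔ R := by
      refine le_trans hABle ?_
      have : Q ⊔ P ≤ P ⊔ Q := sup_le le_sup_right le_sup_left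
      exact le_trans this le_sup_left
    have h3 : R ≤ P ⊔ Q ⊔ R := le_sup_right
    exact sup_le (sup_le h1 h2) (sup_le h2 h3)
  · have h1 : P ≤ P ⊔ A * B ⊔ (A * B ⊔ R) := le_trans le_sup_left le_sup_left
    have h2 : Q ≤ P ⊔ A * B ⊔ (A * B ⊔ R) := le_trans hQle (le_trans le_sup_right le_sup_left)
    have h3 : R ≤ P ⊔ A * B ⊔ (A * B ⊔ R) := le_trans le_sup_right le_sup_right
    exact sup_le (sup_le h1 h2) h3


lemma vcodim_lift1_sq {n d : ℕ} {U : Submodule ℂ (PolyR n)} (hU : U ≤ formSpace n d)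
    (hd : 2 ≤ d) :
    vcodim (n+1) (2*d) (lift1 n d U * lift1 n d U) =
      vcodim n (2*d) (U * U) + hilb n (Ideal.span (U : Set (PolyR n))) (2*d-1) := by
  have hUU : U * U ≤ formSpace n (2*d) := by
    have h0 := mul_le_mul' hU hU
    rw [formSpace_mul] at h0
    have he : d + d = 2*d := by omega
    rwa [he] at h0
  haveI : FiniteDimensional ℂ (U*U : Submodule ℂ (PolyR n)) := fd_of_le_formSpace hUU
  haveI : FiniteDimensional ℂ
      (idealComp (n+1) (Ideal.span ((lift1 n d U : Submodule ℂ (PolyR (n+1))) :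
        Set (PolyR (n+1)))) (2*d-1)) :=
    fd_of_le_formSpace (inf_le_right : _ ≤ formSpace (n+1) (2*d-1))
  have hsq := lift1_sq hU hd
  have hfr : finrank ℂ (lift1 n d U * lift1 n d U : Submodule ℂ (PolyR (n+1)))
      = finrank ℂ (idealComp (n+1) (Ideal.span ((lift1 n d U : Submodule ℂ (PolyR (n+1))) :
          Set (PolyR (n+1)))) (2*d-1))
        + finrank ℂ (U*U : Submodule ℂ (PolyR n)) := by
    rw [hsq, finrank_XS_sup_ren]
  have hdim : finrank ℂ (formSpace (n+1) (2*d)) =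
      finrank ℂ (formSpace (n+1) (2*d-1)) + finrank ℂ (formSpace n (2*d)) := by
    have h0 := finrank_formSpace_succ n (2*d-1)
    have he : 2*d-1+1 = 2*d := by omega
    rwa [he] at h0
  have hleC : finrank ℂ (idealComp (n+1) (Ideal.span ((lift1 n d U : Submodule ℂ (PolyR (n+1))) :
      Set (PolyR (n+1)))) (2*d-1)) ≤ finrank ℂ (formSpace (n+1) (2*d-1)) :=
    Submodule.finrank_mono inf_le_right
  have hleU : finrank ℂ (U*U : Submodule ℂ (PolyR n)) ≤ finrank ℂ (formSpace n (2*d)) :=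
    Submodule.finrank_mono hUU
  have hhilb := hilb_lift1_high hU (by omega : 1 ≤ d) (by omega : d ≤ 2*d-1)
  rw [hilb] at hhilb
  rw [vcodim, vcodim, hfr, hdim]
  omega


lemma liftIter_le {n d : ℕ} {U : Submodule ℂ (PolyR n)} (hU : U ≤ formSpace n d)
    (hd : 1 ≤ d) : ∀ l, liftIter n d U l ≤ formSpace (n+l) d
  | 0 => hU
  | l+1 => lift1_le (liftIter_le hU hd l) hd

theorem stmt14 (n d k : ℕ) (hn : 2 ≤ n) (hd : 2 ≤ d)
    (U : Submodule ℂ (PolyR n)) (hU : U ≤ formSpace n d)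
    (hcodim : vcodim n d U = k) :
    ∀ l : ℕ,
      ((∀ i : ℕ, i ≤ d - 1 →
          hilb (n + l) (Ideal.span (liftIter n d U l : Set (PolyR (n + l)))) i =
            finrank ℂ (formSpace (n + l) i)) ∧
       (∀ i : ℕ, d ≤ i →
          hilb (n + l) (Ideal.span (liftIter n d U l : Set (PolyR (n + l)))) i =
            hilb n (Ideal.span (U : Set (PolyR n))) i)) ∧
      vcodim (n + l) (2 * d) (liftIter n d U l * liftIter n d U l) =
        vcodim n (2 * d) (U * U) +
          l * hilb n (Ideal.span (U : Set (PolyR n))) (2 * d - 1) := by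
  intro l
  induction l with
  | zero =>
    refine ⟨⟨?_, ?_⟩, ?_⟩
    · intro i hi
      exact hilb_low hU (by omega)
    · intro i _
      rfl
    · show vcodim n (2*d) (U * U) = vcodim n (2*d) (U * U) + 0 * _
      omega
  | succ l ih =>
    obtain ⟨⟨ih1, ih2⟩, ih3⟩ := ih
    have hUl : liftIter n d U l ≤ formSpace (n+l) d := liftIter_le hU (by omega) l
    refine ⟨⟨?_, ?_⟩, ?_⟩
    · intro i hi
      exact hilb_low (lift1_le hUl (by omega)) (by omega)
    · intro i hi
      have h1 := hilb_lift1_high hUl (by omega : 1 ≤ d) hi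
      exact h1.trans (ih2 i hi)
    · have h2 := vcodim_lift1_sq hUl hd
      have h3 := ih2 (2*d-1) (by omega)
      show vcodim ((n+l)+1) (2*d) (lift1 (n+l) d (liftIter n d U l) *
          lift1 (n+l) d (liftIter n d U l)) = _
      rw [h2, h3, ih3]
      ring
end

section
/- Let U ⊆ A(n)_d be a linear subspace of codimension k with k ≤ n. Then for a generic k-tuple (l₁,…,l_k) of linearly independent linear forms in A₁, the intersection U ∩ ℂ[l₁,…,l_k]_d has codimension k inside ℂ[l₁,…,l_k]_d, the space of degree-d forms in l₁,…,l_k. In particular, after a generic linear change of coordinates, U ∩ A(k)_d has codimension k in A(k)_d. -/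
open MvPolynomial Module
set_option synthInstance.maxHeartbeats 1000000
set_option maxHeartbeats 1000000

lemma mem_formSpace_iff {n d : ℕ} {p : PolyR n} : p ∈ formSpace n d ↔ p.IsHomogeneous d :=
  mem_homogeneousSubmodule d p

instance fd_formSpace (n d : ℕ) : FiniteDimensional ℂ (formSpace n d) := by
  have h : formSpace n d ≤ restrictTotalDegree (Fin n) ℂ d := fun p hp => by
    rw [mem_restrictTotalDegree]
    exact (mem_formSpace_iff.mp hp).totalDegree_le
  exact Submodule.finiteDimensional_of_le h

lemma linForm_homog {n : ℕ} (c : Fin n → ℂ) : linForm n c ∈ homogeneousSubmodule (Fin n) ℂ 1 :=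
  Submodule.sum_mem _ fun i _ => Submodule.smul_mem _ _ ((mem_homogeneousSubmodule 1 (X i)).mpr (isHomogeneous_X ℂ i))

lemma linForm_add_single {n : ℕ} (v : Fin n → ℂ) (t : ℂ) (j : Fin n) :
    linForm n (fun i => v i + t • Pi.single (M := fun _ => ℂ) j 1 i) = linForm n v + t • X j := by
  unfold linForm
  have : ∀ i : Fin n, (v i + t • Pi.single (M := fun _ => ℂ) j 1 i) • (X i : PolyR n)
      = v i • X i + (t • Pi.single (M := fun _ => ℂ) j 1 i) • X i := fun i => add_smul _ _ _
  simp only [this, Finset.sum_add_distrib]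
  congr 1
  rw [Finset.sum_eq_single j]
  · simp
  · intro i _ hij
    simp [Pi.single_apply, hij]
  · simp

lemma coeff_linForm {n : ℕ} (v : Fin n → ℂ) (j : Fin n) :
    coeff (Finsupp.single j 1) (linForm n v) = v j := by
  unfold linForm
  rw [coeff_sum]
  rw [Finset.sum_eq_single j]
  · simp [coeff_smul, coeff_X]
  · intro i _ hij
    simp only [coeff_smul, coeff_X', smul_eq_mul]
    rw [if_neg, mul_zero]
    intro h
    exact hij (by simpa [Finsupp.single_left_inj] using h)
  · simp

lemma vand_zero {M : Type*} [AddCommGroup M] [Module ℂ M] {N : ℕ} (w : Fin N → M)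
    (h : ∀ t : ℂ, ∑ s : Fin N, t ^ (s : ℕ) • w s = 0) : ∀ s, w s = 0 := by
  classical
  set V : Matrix (Fin N) (Fin N) ℂ := Matrix.vandermonde (fun r => (r : ℂ))
  have hdet : IsUnit V.det := by
    rw [Matrix.det_vandermonde]
    refine Ne.isUnit (Finset.prod_ne_zero_iff.mpr fun i _ => Finset.prod_ne_zero_iff.mpr
      fun j hj => sub_ne_zero.mpr fun hh => ?_)
    rw [Finset.mem_Ioi] at hj
    exact absurd (Fin.val_injective (by exact_mod_cast hh)) hj.ne'
  intro s
  have key : ∀ r : Fin N, ∑ j, V r j • w j = 0 := by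
    intro r
    simpa [V, Matrix.vandermonde] using h (r : ℂ)
  calc w s = ∑ j, (1 : Matrix (Fin N) (Fin N) ℂ) s j • w j := by
        rw [Finset.sum_eq_single s]
        · simp
        · intro b _ hb
          rw [Matrix.one_apply_ne (Ne.symm hb), zero_smul]
        · intro hs; exact absurd (Finset.mem_univ s) hs
    _ = ∑ j, (V⁻¹ * V) s j • w j := by rw [Matrix.nonsing_inv_mul _ hdet]
    _ = ∑ r, V⁻¹ s r • (∑ j, V r j • w j) := by
        simp only [Matrix.mul_apply, Finset.sum_smul, Finset.smul_sum, smul_smul]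
        rw [Finset.sum_comm]
    _ = 0 := by simp [key]

lemma vand_mem {M : Type*} [AddCommGroup M] [Module ℂ M] {N : ℕ} (w : Fin N → M)
    (Sp : Submodule ℂ M) (h : ∀ t : ℂ, ∑ s : Fin N, t ^ (s : ℕ) • w s ∈ Sp) :
    ∀ s, w s ∈ Sp := by
  have h' : ∀ t : ℂ, ∑ s : Fin N, t ^ (s : ℕ) • Sp.mkQ (w s) = 0 := by
    intro t
    have : ∑ s : Fin N, t ^ (s : ℕ) • Sp.mkQ (w s) = Sp.mkQ (∑ s : Fin N, t ^ (s : ℕ) • w s) := by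
      rw [map_sum]
      simp [map_smul]
    rw [this, Submodule.mkQ_apply, Submodule.Quotient.mk_eq_zero]
    exact h t
  intro s
  have := vand_zero (fun s => Sp.mkQ (w s)) h' s
  simp only [Submodule.mkQ_apply, Submodule.Quotient.mk_eq_zero] at this
  exact this

def powSet (n d : ℕ) : Set (PolyR n) := {p | ∃ v : Fin n → ℂ, p = (linForm n v) ^ d}

lemma degree_add' {n : ℕ} (x y : Fin n →₀ ℕ) : (x + y).degree = x.degree + y.degree := by
  simp only [Finsupp.degree_eq_weight_one, map_add]

lemma degree_single' {n : ℕ} (j : Fin n) : (Finsupp.single j 1).degree = 1 := by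
  classical
  simp [Finsupp.degree_apply, Finsupp.support_single_ne_zero j one_ne_zero]

lemma span_pow_step (n d : ℕ) :
    ∀ a : ℕ, a ≤ d → ∀ β : Fin n →₀ ℕ, β.degree = a → ∀ v : Fin n → ℂ,
      (linForm n v) ^ (d - a) * monomial β 1 ∈ Submodule.span ℂ (powSet n d) := by
  intro a
  induction a with
  | zero =>
    intro _ β hβ v
    have hβ0 : β = 0 := (Finsupp.degree_eq_zero_iff β).mp hβ
    subst hβ0
    rw [monomial_zero', map_one, mul_one, Nat.sub_zero]
    exact Submodule.subset_span ⟨v, rfl⟩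
  | succ a IH =>
    intro ha β hβ v
    have hβne : β ≠ 0 := by
      intro h0; rw [h0, map_zero] at hβ; exact (Nat.succ_ne_zero a) hβ.symm
    obtain ⟨j, hj⟩ : ∃ j, β j ≠ 0 := by
      by_contra hc
      push_neg at hc
      exact hβne (Finsupp.ext fun a => hc a)
    set β' : Fin n →₀ ℕ := β - Finsupp.single j 1 with hβ'
    have hsum : Finsupp.single j 1 + β' = β := by
      ext i
      by_cases hij : i = j
      · subst hij
        simp [β', Nat.add_sub_cancel' (Nat.one_le_iff_ne_zero.mpr hj),
          Nat.sub_add_cancel (Nat.one_le_iff_ne_zero.mpr hj)]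
      · simp [β', Finsupp.single_apply, Ne.symm hij, hij]
    have hdeg' : β'.degree = a := by
      have h2 := congrArg Finsupp.degree hsum
      rw [degree_add', degree_single' j, hβ] at h2
      omega
    set m := d - a with hm
    have hm1 : 1 ≤ m := by omega
    set l := linForm n v with hl
    set w : Fin (m + 1) → PolyR n :=
      fun s => (Nat.choose m s : ℂ) • (X j ^ (s : ℕ) * l ^ (m - (s : ℕ)) * monomial β' 1) with hw
    have hmem : ∀ s, w s ∈ Submodule.span ℂ (powSet n d) := by
      apply vand_mem
      intro t
      have hexp : ∑ s : Fin (m+1), t ^ (s : ℕ) • w s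
          = (t • X j + l) ^ m * monomial β' 1 := by
        rw [add_pow, Finset.sum_mul, ← Fin.sum_univ_eq_sum_range]
        refine Finset.sum_congr rfl fun s _ => ?_
        simp only [hw, smul_eq_C_mul, smul_pow, C_mul, C_pow, ← C_eq_coe_nat]
        ring
      rw [hexp, add_comm (t • (X j : PolyR n)) l]
      have h3 := IH (by omega) β' hdeg' (fun i => v i + t • Pi.single (M := fun _ => ℂ) j 1 i)
      rw [linForm_add_single] at h3
      exact h3
    have h1 : w ⟨1, by omega⟩ ∈ Submodule.span ℂ (powSet n d) := hmem _
    rw [hw] at h1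
    simp only [Nat.choose_one_right] at h1
    have hmne : (m : ℂ) ≠ 0 := Nat.cast_ne_zero.mpr (by omega)
    rw [Submodule.smul_mem_iff _ hmne] at h1
    have heq : (linForm n v) ^ (d - (a+1)) * monomial β 1
        = X j ^ ((⟨1, by omega⟩ : Fin (m+1)) : ℕ) * l ^ (m - ((⟨1, by omega⟩ : Fin (m+1)) : ℕ)) * monomial β' 1 := by
      have hda : d - (a + 1) = m - 1 := by omega
      rw [hda, ← hsum, monomial_single_add]
      ring
    rw [heq]
    exact h1

lemma formSpace_le_span_pow (n d : ℕ) :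
    formSpace n d ≤ Submodule.span ℂ (powSet n d) := by
  intro p hp
  rw [mem_formSpace_iff] at hp
  rw [p.as_sum]
  apply Submodule.sum_mem
  intro β hβ
  have hdeg : β.degree = d := by
    rw [Finsupp.degree_eq_weight_one]
    exact hp (mem_support_iff.mp hβ)
  have := span_pow_step n d d le_rfl β hdeg 0
  rw [Nat.sub_self, pow_zero, one_mul] at this
  have h2 : monomial β (coeff β p) = coeff β p • monomial β 1 := by
    rw [smul_monomial, smul_eq_mul, mul_one]
  rw [h2]
  exact Submodule.smul_mem _ _ this

lemma exists_eval_poly (n k d : ℕ) (i : Fin k) (ψ : PolyR n →ₗ[ℂ] ℂ) :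
    ∃ E : MvPolynomial (Fin k × Fin n) ℂ, ∀ c : Fin k → Fin n → ℂ,
      eval (fun p : Fin k × Fin n => c p.1 p.2) E = ψ ((linForm n (c i)) ^ d) := by
  classical
  set S := MvPolynomial (Fin k × Fin n) ℂ with hS
  set L : MvPolynomial (Fin n) S := ∑ j, (C (X (i, j)) : MvPolynomial (Fin n) S) * X j with hL
  refine ⟨∑ β ∈ (L ^ d).support, coeff β (L ^ d) * C (ψ (monomial β 1)), ?_⟩
  intro c
  set f : S →+* ℂ := eval (fun p : Fin k × Fin n => c p.1 p.2) with hf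
  have hmapL : MvPolynomial.map f L = linForm n (c i) := by
    rw [hL, map_sum]
    unfold linForm
    refine Finset.sum_congr rfl fun j _ => ?_
    rw [map_mul, map_C, map_X, smul_eq_C_mul, hf, eval_X]
  have key : (linForm n (c i)) ^ d = MvPolynomial.map f (L ^ d) := by
    rw [map_pow, hmapL]
  have hrep : MvPolynomial.map f (L ^ d) = ∑ β ∈ (L ^ d).support, monomial β (f (coeff β (L ^ d))) := by
    conv_lhs => rw [(L ^ d).as_sum]
    rw [map_sum]
    exact Finset.sum_congr rfl fun β _ => map_monomial _ _ _
  rw [key, hrep, map_sum, map_sum]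
  refine Finset.sum_congr rfl fun β _ => ?_
  have h1 : monomial β (f (coeff β (L ^ d))) = f (coeff β (L ^ d)) • monomial β 1 := by
    rw [smul_monomial, smul_eq_mul, mul_one]
  have h2 : f (C (ψ (monomial β 1))) = ψ (monomial β 1) := by rw [hf]; exact eval_C _
  rw [map_mul, h2, h1, map_smul, smul_eq_mul]

theorem stmt18 (n d k : ℕ) (hn : 2 ≤ n) (hd : 2 ≤ d) (hkn : k ≤ n)
    (U : Submodule ℂ (PolyR n)) (hU : U ≤ formSpace n d)
    (hcodim : vcodim n d U = k) :
    ∃ P : MvPolynomial (Fin k × Fin n) ℂ, P ≠ 0 ∧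
      ∀ c : Fin k → Fin n → ℂ,
        eval (fun p : Fin k × Fin n => c p.1 p.2) P ≠ 0 →
        LinearIndependent ℂ (fun i : Fin k => linForm n (c i)) ∧
        finrank ℂ (Submodule.map
            (MvPolynomial.aeval (fun i : Fin k => linForm n (c i))).toLinearMap
            (formSpace k d)) -
          finrank ℂ (U ⊓ Submodule.map
            (MvPolynomial.aeval (fun i : Fin k => linForm n (c i))).toLinearMap
            (formSpace k d) : Submodule ℂ (PolyR n)) = k := by
  classical
  have hcodim' : finrank ℂ (formSpace n d) - finrank ℂ U = k := hcodim
  set F := formSpace n d with hF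
  set U' : Submodule ℂ F := Submodule.comap F.subtype U with hU'
  set V := F ⧸ U' with hV
  have hUU' : finrank ℂ U' = finrank ℂ U := (Submodule.comapSubtypeEquivOfLe hU).finrank_eq
  have hq : finrank ℂ V + finrank ℂ U' = finrank ℂ F := Submodule.finrank_quotient_add_finrank U'
  have hdimV : finrank ℂ V = k := by
    have : finrank ℂ (formSpace n d) = finrank ℂ F := rfl
    omega
  set b : Basis (Fin k) ℂ V := Module.finBasisOfFinrankEq ℂ V hdimV with hb
  set proj : PolyR n →ₗ[ℂ] F := LinearMap.codRestrict F (homogeneousComponent d)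
    (fun p => by rw [hF, formSpace]; exact (mem_homogeneousSubmodule _ _).mpr (homogeneousComponent_isHomogeneous d p)) with hproj
  set qmap : PolyR n →ₗ[ℂ] V := U'.mkQ ∘ₗ proj with hqmap
  have keyA : ∀ (p : PolyR n) (hp : p ∈ F), qmap p = U'.mkQ ⟨p, hp⟩ := by
    intro p hp
    rw [hqmap]
    simp only [LinearMap.comp_apply]
    congr 1
    apply Subtype.ext
    simp only [hproj, LinearMap.codRestrict_apply]
    rw [homogeneousComponent_of_mem hp, if_pos rfl]
  -- functionals
  set psi : Fin k → (PolyR n →ₗ[ℂ] ℂ) := fun t => (b.coord t) ∘ₗ qmap with hpsi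
  have hE : ∀ it : Fin k × Fin k, ∃ E : MvPolynomial (Fin k × Fin n) ℂ,
      ∀ c : Fin k → Fin n → ℂ,
        eval (fun p : Fin k × Fin n => c p.1 p.2) E = psi it.2 ((linForm n (c it.1)) ^ d) :=
    fun it => exists_eval_poly n k d it.1 (psi it.2)
  choose E hEspec using hE
  set Edet : MvPolynomial (Fin k × Fin n) ℂ := Matrix.det (Matrix.of fun i t : Fin k => E (i, t)) with hEdet
  set Plin : MvPolynomial (Fin k × Fin n) ℂ :=
    Matrix.det (Matrix.of fun i j : Fin k => (X (i, Fin.castLE hkn j) : MvPolynomial (Fin k × Fin n) ℂ)) with hPlin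
  have hevalEdet : ∀ c : Fin k → Fin n → ℂ,
      eval (fun p : Fin k × Fin n => c p.1 p.2) Edet
        = Matrix.det (Matrix.of fun i t : Fin k => psi t ((linForm n (c i)) ^ d)) := by
    intro c
    rw [hEdet, RingHom.map_det]
    congr 1
    ext i t
    exact hEspec (i, t) c
  have hevalPlin : ∀ c : Fin k → Fin n → ℂ,
      eval (fun p : Fin k × Fin n => c p.1 p.2) Plin
        = Matrix.det (Matrix.of fun i j : Fin k => c i (Fin.castLE hkn j)) := by
    intro c
    rw [hPlin, RingHom.map_det]
    congr 1
    ext i j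
    simp [Matrix.map_apply]
  have hPlinne : Plin ≠ 0 := by
    intro h0
    have := hevalPlin (fun i j => if Fin.castLE hkn i = j then 1 else 0)
    rw [h0, map_zero] at this
    have hid : (Matrix.of fun i j : Fin k =>
        (if Fin.castLE hkn i = Fin.castLE hkn j then (1:ℂ) else 0)) = 1 := by
      ext i j
      by_cases hij : i = j
      · subst hij; simp [Matrix.one_apply]
      · rw [Matrix.of_apply, if_neg, Matrix.one_apply_ne hij]
        exact fun hc => hij (Fin.castLE_injective hkn hc)
    rw [hid, Matrix.det_one] at this
    exact one_ne_zero this.symm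
  have hTop : Submodule.span ℂ (qmap '' powSet n d) = ⊤ := by
    rw [eq_top_iff]
    rintro x -
    obtain ⟨y, rfl⟩ := U'.mkQ_surjective x
    have hx : U'.mkQ y = qmap y.1 := by rw [keyA y.1 y.2]
    rw [hx, ← Submodule.map_span]
    exact Submodule.mem_map_of_mem (formSpace_le_span_pow n d y.2)
  obtain ⟨tset, htsub, htspan, htli⟩ := exists_linearIndependent ℂ (qmap '' powSet n d)
  rw [hTop] at htspan
  set bt : Basis ↥tset ℂ V := Basis.mk htli (by rw [Subtype.range_coe, htspan]) with hbt
  letI : Fintype ↥tset := FiniteDimensional.fintypeBasisIndex bt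
  have hcard : Fintype.card ↥tset = k := by
    have := Module.finrank_eq_card_basis bt
    omega
  set e : ↥tset ≃ Fin k := Fintype.equivFinOfCardEq hcard with he
  set bt' : Basis (Fin k) ℂ V := bt.reindex e with hbt'
  have hbtmem : ∀ r : Fin k, ∃ v : Fin n → ℂ, bt' r = qmap ((linForm n v) ^ d) := by
    intro r
    have h1 : bt' r = ↑(e.symm r) := by rw [hbt', Basis.reindex_apply, hbt, Basis.mk_apply]
    have h2 : ↑(e.symm r) ∈ qmap '' powSet n d := htsub (e.symm r).2
    obtain ⟨p, hp, hqp⟩ := h2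
    obtain ⟨v, rfl⟩ := hp
    exact ⟨v, by rw [h1, ← hqp]⟩
  choose mw hmw using hbtmem
  have hEdetne : Edet ≠ 0 := by
    intro h0
    have hev := hevalEdet mw
    rw [h0, map_zero] at hev
    have hMT : (Matrix.of fun i t : Fin k => psi t ((linForm n (mw i)) ^ d))
        = Matrix.transpose (b.toMatrix bt') := by
      ext i t
      rw [Matrix.of_apply, Matrix.transpose_apply, Basis.toMatrix_apply, hpsi]
      simp only [LinearMap.comp_apply, Basis.coord_apply]
      rw [← hmw i]
    rw [hMT, Matrix.det_transpose] at hev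
    have hmul := Basis.toMatrix_mul_toMatrix_flip b bt'
    have hdetmul := congrArg Matrix.det hmul
    rw [Matrix.det_mul, Matrix.det_one] at hdetmul
    exact left_ne_zero_of_mul_eq_one hdetmul hev.symm
  refine ⟨Plin * Edet, mul_ne_zero hPlinne hEdetne, ?_⟩
  intro c hc
  rw [map_mul] at hc
  have h1 : eval (fun p : Fin k × Fin n => c p.1 p.2) Plin ≠ 0 := left_ne_zero_of_mul hc
  have h2 : eval (fun p : Fin k × Fin n => c p.1 p.2) Edet ≠ 0 := right_ne_zero_of_mul hc
  rw [hevalPlin] at h1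
  rw [hevalEdet] at h2
  constructor
  · -- linear independence
    rw [Fintype.linearIndependent_iff]
    intro g hg
    have hcoeffs : ∀ j : Fin n, ∑ i, g i * c i j = 0 := by
      intro j
      have hco := congrArg (coeff (Finsupp.single j 1)) hg
      rw [coeff_sum] at hco
      simpa [coeff_smul, coeff_linForm] using hco
    have hvm : Matrix.vecMul g (Matrix.of fun i j : Fin k => c i (Fin.castLE hkn j)) = 0 := by
      funext j
      simp only [Matrix.vecMul, dotProduct, Matrix.of_apply, Pi.zero_apply]
      exact hcoeffs _
    exact fun i => congrFun (Matrix.eq_zero_of_vecMul_eq_zero h1 hvm) i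
  · -- the codimension count
    set l : Fin k → PolyR n := fun i => linForm n (c i) with hldef
    set W : Submodule ℂ (PolyR n) :=
      Submodule.map (MvPolynomial.aeval (fun i : Fin k => linForm n (c i))).toLinearMap
        (formSpace k d) with hWdef
    have hWF : W ≤ F := by
      rintro w ⟨p, hp, rfl⟩
      have hhom : (aeval (fun i : Fin k => linForm n (c i)) p).IsHomogeneous (1 * d) :=
        (mem_formSpace_iff.mp hp).aeval _ (fun i => (mem_homogeneousSubmodule _ _).mp (linForm_homog (c i)))
      rw [one_mul] at hhom
      exact mem_formSpace_iff.mpr hhom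
    haveI : FiniteDimensional ℂ W := Submodule.finiteDimensional_of_le hWF
    set r : ↥W →ₗ[ℂ] V := qmap ∘ₗ W.subtype with hr
    have hvmem : ∀ i : Fin k, l i ^ d ∈ W := by
      intro i
      refine ⟨X i ^ d, mem_formSpace_iff.mpr (isHomogeneous_X_pow i d), ?_⟩
      rw [AlgHom.toLinearMap_apply, map_pow, aeval_X]
    set M : Matrix (Fin k) (Fin k) ℂ := Matrix.of fun i t : Fin k => psi t (l i ^ d) with hM
    have hdetM : M.det ≠ 0 := h2
    have hrepr : ∀ i t, (b.repr (qmap (l i ^ d))) t = M i t := by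
      intro i t
      rw [hM, Matrix.of_apply, hpsi]
      simp only [LinearMap.comp_apply, Basis.coord_apply]
    have hsumrep : ∀ i : Fin k, ∑ t, M i t • b t = qmap (l i ^ d) := by
      intro i
      rw [← b.sum_repr (qmap (l i ^ d))]
      exact Finset.sum_congr rfl fun t _ => by rw [hrepr]
    have hbs : ∀ s : Fin k, b s ∈ LinearMap.range r := by
      intro s
      have hMinv := Matrix.nonsing_inv_mul M (Ne.isUnit hdetM)
      have hbsum : b s = ∑ i, (M⁻¹ s i) • qmap (l i ^ d) := by
        calc b s = ∑ t, (1 : Matrix (Fin k) (Fin k) ℂ) s t • b t := by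
              rw [Finset.sum_eq_single s]
              · simp
              · intro t _ ht
                rw [Matrix.one_apply_ne (Ne.symm ht), zero_smul]
              · intro hs; exact absurd (Finset.mem_univ s) hs
          _ = ∑ t, (M⁻¹ * M) s t • b t := by rw [hMinv]
          _ = ∑ i, (M⁻¹ s i) • qmap (l i ^ d) := by
              simp only [Matrix.mul_apply, Finset.sum_smul, smul_smul]
              rw [Finset.sum_comm]
              refine Finset.sum_congr rfl fun i _ => ?_
              rw [← hsumrep i, Finset.smul_sum]
              exact Finset.sum_congr rfl fun t _ => by rw [smul_smul]
      rw [hbsum]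
      apply Submodule.sum_mem
      intro i _
      apply Submodule.smul_mem
      exact ⟨⟨l i ^ d, hvmem i⟩, rfl⟩
    have hrange : LinearMap.range r = ⊤ := by
      rw [eq_top_iff, ← b.span_eq]
      rw [Submodule.span_le]
      rintro x ⟨s, rfl⟩
      exact hbs s
    have hker : LinearMap.ker r = Submodule.comap W.subtype (U ⊓ W) := by
      ext x
      rw [LinearMap.mem_ker, hr, LinearMap.comp_apply, Submodule.subtype_apply]
      rw [keyA x.1 (hWF x.2), Submodule.mkQ_apply, Submodule.Quotient.mk_eq_zero]
      simp only [Submodule.mem_comap, Submodule.subtype_apply, Submodule.mem_inf]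
      constructor
      · intro hx; exact ⟨hx, x.2⟩
      · intro hx; exact hx.1
    have hrn := LinearMap.finrank_range_add_finrank_ker r
    rw [hrange, finrank_top, hker] at hrn
    have hkerW : finrank ℂ (Submodule.comap W.subtype (U ⊓ W)) = finrank ℂ (U ⊓ W : Submodule ℂ (PolyR n)) := by
      have hle : (U ⊓ W : Submodule ℂ (PolyR n)) ≤ W := inf_le_right
      have : Submodule.comap W.subtype (U ⊓ W) ≃ₗ[ℂ] (U ⊓ W : Submodule ℂ (PolyR n)) :=
        Submodule.comapSubtypeEquivOfLe hle
      exact this.finrank_eq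
    rw [hkerW] at hrn
    omega
end
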